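/- arXiv:2506.05037 — 3 statements merged into one kernel-verified Lean document; each statement's English description precedes it below -/
import Mathlib

section
/- Let 0 < s ≤ 1 and 0 < p < ∞, and let u ∈ M^{s,p}(X) = Ṁ^{s,p}(X) ∩ L^p(X) be an M^{s,p}-quasicontinuous function. Then for every O ∈ X there is a set E(O) ⊂ X that is (s,p)-thin at infinity such that lim_{d(x,O)→∞, x ∈ X∖E(O)} u(x) = 0. -/
open MeasureTheory Metric Set Filter
open scoped ENNReal NNReal Topology

noncomputable section
namespace Paper

variable {X : Type*} [MetricSpace X] [MeasurableSpace X]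

/-- The median `m_u(E)` of a function `u` over a set `E`. -/
def median (μ : Measure X) (u : X → ℝ) (E : Set X) : ℝ :=
  sInf {a : ℝ | μ {x | x ∈ E ∧ a < u x} < μ E / 2}

/-- `g` is an `s`-gradient of `u` (with respect to `μ`). -/
def IsSGradient (μ : Measure X) (s : ℝ) (u : X → ℝ) (g : X → ℝ≥0∞) : Prop :=
  Measurable g ∧ ∃ N : Set X, μ N = 0 ∧ ∀ x ∉ N, ∀ y ∉ N,
    ENNReal.ofReal |u x - u y| ≤ ENNReal.ofReal (dist x y ^ s) * (g x + g y)

/-- The `p`-th power of the `L^p` quasinorm of `u : X → ℝ` restricted to `F`. -/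
def lpNormP (μ : Measure X) (p : ℝ) (u : X → ℝ) (F : Set X) : ℝ≥0∞ :=
  ∫⁻ x in F, ENNReal.ofReal |u x| ^ p ∂μ

/-- Membership in the homogeneous Hajłasz–Sobolev space `Ṁ^{s,p}(X)`:
`u` is measurable (hence finite everywhere, being real valued) and has an
`s`-gradient in `L^p`. -/
def MemHomHajlasz (μ : Measure X) (s p : ℝ) (u : X → ℝ) : Prop :=
  Measurable u ∧ ∃ g : X → ℝ≥0∞, IsSGradient μ s u g ∧ (∫⁻ x, g x ^ p ∂μ) < ⊤

/-- The homogeneous Hajłasz quasi-seminorm `‖u‖_{Ṁ^{s,p}}`. -/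
def hajlaszSeminorm (μ : Measure X) (s p : ℝ) (u : X → ℝ) : ℝ≥0∞ :=
  ⨅ (g : X → ℝ≥0∞) (_ : IsSGradient μ s u g), (∫⁻ x, g x ^ p ∂μ) ^ (1 / p)

/-- The quasi-seminorm `‖u‖_{M^{s,p}} = ‖u‖_{L^p} + ‖u‖_{Ṁ^{s,p}}`. -/
def hajlaszNorm (μ : Measure X) (s p : ℝ) (u : X → ℝ) : ℝ≥0∞ :=
  lpNormP μ p u Set.univ ^ (1 / p) + hajlaszSeminorm μ s p u

/-- The capacity `Cap_{M^{s,p}}(E)`; the infimum over the empty set is `⊤ = ∞`. -/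
def hajlaszCapacity (μ : Measure X) (s p : ℝ) (E : Set X) : ℝ≥0∞ :=
  ⨅ (u : X → ℝ) (_ : MemHomHajlasz μ s p u ∧ lpNormP μ p u Set.univ < ⊤ ∧
      ∃ U : Set X, IsOpen U ∧ E ⊆ U ∧ ∀ x ∈ U, 1 ≤ u x),
    hajlaszNorm μ s p u ^ p

/-- `M^{s,p}`-quasicontinuity of `u`. -/
def HajlaszQC (μ : Measure X) (s p : ℝ) (u : X → ℝ) : Prop :=
  ∀ ε : ℝ, 0 < ε → ∃ E : Set X,
    hajlaszCapacity μ s p E < ENNReal.ofReal ε ∧ ContinuousOn u Eᶜ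

/-- The variational relative capacity `cap_{s,p}(E,F)`. -/
def relCap (μ : Measure X) (s p : ℝ) (E F : Set X) : ℝ≥0∞ :=
  ⨅ (v : X → ℝ) (_ : MemHomHajlasz μ s p v ∧ HajlaszQC μ s p v ∧ ∀ x ∈ E, 1 ≤ v x),
    (lpNormP μ p v F / ENNReal.ofReal (Metric.diam F ^ (s * p)) +
      ⨅ (g : X → ℝ≥0∞) (_ : IsSGradient μ s v g), ∫⁻ x in F, g x ^ p ∂μ)

/-- The annulus `A_r(O) = B(O, κ r) \ B(O, r)`. -/
def ann (κ : ℝ) (O : X) (r : ℝ) : Set X := ball O (κ * r) \ ball O r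

/-- The enlarged annulus `Λ A_r(O) = B(O, Λ κ r) \ B(O, r / Λ)`. -/
def annL (κ Λ : ℝ) (O : X) (r : ℝ) : Set X := ball O (Λ * (κ * r)) \ ball O (r / Λ)

/-- `E` is `(s,p)`-thin at infinity with respect to the basepoint `O`. -/
def ThinAtInfinity (μ : Measure X) (s p κ : ℝ) (O : X) (E : Set X) : Prop :=
  ∀ Λ : ℝ, 1 < Λ →
    Tendsto (fun m : ℕ =>
        ∑' j : ℕ, relCap μ s p (E ∩ ann κ O (κ ^ (m + j))) (annL κ Λ O (κ ^ (m + j))))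
      atTop (𝓝 0)

/-- `u(x) → c` as `d(x,O) → ∞` along `x ∈ X \ E`. -/
def TendstoOutside (O : X) (E : Set X) (u : X → ℝ) (c : ℝ) : Prop :=
  ∀ ε : ℝ, 0 < ε → ∃ N : ℕ, ∀ x : X, x ∉ E → (N : ℝ) < dist x O → |u x - c| < ε

/-- The `ρ`-restricted Hausdorff content of codimension `d`, where the infimum runs
over all finite or countable coverings of `E` by balls of positive radii at most `ρ`. -/
def hContent (μ : Measure X) (d : ℝ) (ρ : ℝ≥0∞) (E : Set X) : ℝ≥0∞ :=
  ⨅ (c : ℕ → X) (r : ℕ → ℝ) (J : Set ℕ)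
    (_ : (∀ j ∈ J, 0 < r j ∧ ENNReal.ofReal (r j) ≤ ρ) ∧
        E ⊆ ⋃ j ∈ J, ball (c j) (r j)),
    ∑' j : J, μ (ball (c (j : ℕ)) (r (j : ℕ))) / ENNReal.ofReal (r (j : ℕ) ^ d)

/-- The homogeneous fractional Sobolev quasinorm `‖u‖_{Ẇ^{s,p}_q}`. -/
def fracNorm (μ : Measure X) (s p q : ℝ) (u : X → ℝ) : ℝ≥0∞ :=
  (∫⁻ x, (∫⁻ y, ENNReal.ofReal |u x - u y| ^ q /
      (ENNReal.ofReal (dist x y ^ (s * q)) * μ (ball x (dist x y))) ∂μ) ^ (p / q) ∂μ) ^ (1 / p)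

/-- Membership in the homogeneous fractional Sobolev space `Ẇ^{s,p}_q(X)`. -/
def MemFrac (μ : Measure X) (s p q : ℝ) (u : X → ℝ) : Prop :=
  Measurable u ∧ fracNorm μ s p q u < ⊤

/-- The capacity `Cap_{W^{s,p}_q}(E)`; the infimum over the empty set is `⊤ = ∞`. -/
def fracCapacity (μ : Measure X) (s p q : ℝ) (E : Set X) : ℝ≥0∞ :=
  ⨅ (u : X → ℝ) (_ : MemFrac μ s p q u ∧ lpNormP μ p u Set.univ < ⊤ ∧
      ∃ U : Set X, IsOpen U ∧ E ⊆ U ∧ ∀ x ∈ U, 1 ≤ u x),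
    (lpNormP μ p u Set.univ ^ (1 / p) + fracNorm μ s p q u) ^ p

/-- `W^{s,p}_q`-quasicontinuity of `u`. -/
def FracQC (μ : Measure X) (s p q : ℝ) (u : X → ℝ) : Prop :=
  ∀ ε : ℝ, 0 < ε → ∃ E : Set X,
    fracCapacity μ s p q E < ENNReal.ofReal ε ∧ ContinuousOn u Eᶜ


-- ==================== auxiliary lemmas ====================
section Aux
set_option linter.unusedSectionVars false

lemma isSGradient_zero (μ : Measure X) (s : ℝ) :
    IsSGradient μ s (fun _ => (0:ℝ)) (fun _ => 0) :=
  ⟨measurable_const, ∅, measure_empty, by intro x _ y _; simp⟩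

lemma lpNormP_zero (μ : Measure X) {p : ℝ} (hp : 0 < p) (F : Set X) :
    lpNormP μ p (fun _ => (0:ℝ)) F = 0 := by
  simp [lpNormP, ENNReal.zero_rpow_of_pos hp]

lemma memHomHajlasz_zero (μ : Measure X) (s : ℝ) {p : ℝ} (hp : 0 < p) :
    MemHomHajlasz μ s p (fun _ => (0:ℝ)) :=
  ⟨measurable_const, fun _ => 0, isSGradient_zero μ s,
    by simp [ENNReal.zero_rpow_of_pos hp]⟩

lemma hajlaszQC_zero (μ : Measure X) (s : ℝ) {p : ℝ} (hp : 0 < p) :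
    HajlaszQC μ s p (fun _ => (0:ℝ)) := by
  intro ε hε
  refine ⟨∅, ?_, continuousOn_const⟩
  have h1 : hajlaszCapacity μ s p ∅ ≤ hajlaszNorm μ s p (fun _ => (0:ℝ)) ^ p := by
    refine iInf₂_le (fun _ => (0:ℝ)) ?_
    refine ⟨memHomHajlasz_zero μ s hp, ?_, ∅, isOpen_empty, subset_rfl, by simp⟩
    rw [lpNormP_zero μ hp]; exact ENNReal.zero_lt_top
  have h2 : hajlaszNorm μ s p (fun _ => (0:ℝ)) = 0 := by
    have hsem : hajlaszSeminorm μ s p (fun _ => (0:ℝ)) = 0 := by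
      refine le_antisymm ?_ (zero_le)
      refine le_trans (iInf₂_le (fun _ => 0) (isSGradient_zero μ s)) ?_
      simp only [ENNReal.zero_rpow_of_pos hp, lintegral_zero,
        ENNReal.zero_rpow_of_pos (one_div_pos.mpr hp), le_refl]
    rw [hajlaszNorm, hsem, lpNormP_zero μ hp,
      ENNReal.zero_rpow_of_pos (one_div_pos.mpr hp), add_zero]
  rw [h2, ENNReal.zero_rpow_of_pos hp] at h1
  exact lt_of_le_of_lt h1 (by simpa using ENNReal.ofReal_pos.mpr hε)

lemma relCap_eq_zero_of_empty (μ : Measure X) (s : ℝ) {p : ℝ} (hp : 0 < p)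
    {E : Set X} (hE : E = ∅) (F : Set X) : relCap μ s p E F = 0 := by
  refine le_antisymm ?_ (zero_le)
  have h1 : relCap μ s p E F ≤
      (lpNormP μ p (fun _ => (0:ℝ)) F / ENNReal.ofReal (Metric.diam F ^ (s * p)) +
        ⨅ (g : X → ℝ≥0∞) (_ : IsSGradient μ s (fun _ => (0:ℝ)) g), ∫⁻ x in F, g x ^ p ∂μ) := by
    refine iInf₂_le (fun _ => (0:ℝ)) ?_
    exact ⟨memHomHajlasz_zero μ s hp, hajlaszQC_zero μ s hp, by simp [hE]⟩
  refine le_trans h1 ?_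
  have h2 : (⨅ (g : X → ℝ≥0∞) (_ : IsSGradient μ s (fun _ => (0:ℝ)) g),
      ∫⁻ x in F, g x ^ p ∂μ) ≤ 0 := by
    refine le_trans (iInf₂_le (fun _ => 0) (isSGradient_zero μ s)) ?_
    simp only [ENNReal.zero_rpow_of_pos hp, lintegral_zero, le_refl]
  rw [lpNormP_zero μ hp, ENNReal.zero_div]
  simpa using h2

lemma diam_annL_ge (μ : Measure X)
    (hball : ∀ (x : X) (r : ℝ), 0 < r → 0 < μ (ball x r) ∧ μ (ball x r) < ⊤)
    {cR κ : ℝ} (hcR1 : cR < 1) (hκ : 1 < κ)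
    (hrev : ∀ (x : X) (r : ℝ), 0 < r → μ (ball x r) ≤ ENNReal.ofReal cR * μ (ball x (κ * r)))
    {Λ r : ℝ} (hΛ : 1 < Λ) (hr : 0 < r) {O z : X} (hz : z ∈ ann κ O r) :
    (Λ - 1) * r / (Λ * κ) ≤ Metric.diam (annL κ Λ O r) := by
  have hκ0 : (0:ℝ) < κ := lt_trans one_pos hκ
  have hΛ0 : (0:ℝ) < Λ := lt_trans one_pos hΛ
  have hΛ1 : (0:ℝ) < Λ - 1 := by linarith
  set t : ℝ := (Λ - 1) * r / (Λ * κ) with ht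
  have ht0 : 0 < t := by positivity
  have hκt : κ * t = (Λ - 1) * r / Λ := by
    rw [ht]; field_simp
  have hκtr : κ * t < (Λ - 1) * r := by
    rw [hκt, div_lt_iff₀ hΛ0]
    nlinarith [mul_pos (mul_pos hΛ1 hr) hΛ1]
  have hlt : μ (ball z t) < μ (ball z (κ * t)) := by
    refine lt_of_le_of_lt (hrev z t ht0) ?_
    have h2 := hball z (κ * t) (by positivity)
    calc ENNReal.ofReal cR * μ (ball z (κ * t))
        < 1 * μ (ball z (κ * t)) := by
          rw [mul_comm _ (μ _), mul_comm (1:ℝ≥0∞)]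
          exact ENNReal.mul_lt_mul_right (ne_of_gt h2.1) (ne_of_lt h2.2) (ENNReal.ofReal_lt_one.mpr hcR1)
      _ = μ (ball z (κ * t)) := one_mul _
  have hw : ∃ w, w ∈ ball z (κ * t) \ ball z t := by
    by_contra hcon
    push_neg at hcon
    have hsub : ball z (κ * t) ⊆ ball z t := by
      intro w hwmem
      by_contra hw2
      exact hcon w ⟨hwmem, hw2⟩
    exact absurd (measure_mono hsub) (not_le.mpr hlt)
  obtain ⟨w, hw1, hw2⟩ := hw
  rw [mem_ball] at hw1
  have hw2' : t ≤ dist w z := not_lt.mp (fun h => hw2 (mem_ball.mpr h))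
  obtain ⟨hz1, hz2⟩ := hz
  rw [mem_ball] at hz1
  have hz2' : r ≤ dist z O := not_lt.mp (fun h => hz2 (mem_ball.mpr h))
  have hzF : z ∈ annL κ Λ O r := by
    constructor
    · rw [mem_ball]
      calc dist z O < κ * r := hz1
        _ ≤ Λ * (κ * r) := by nlinarith
    · intro hcon
      rw [mem_ball] at hcon
      have : r / Λ < r := by
        rw [div_lt_iff₀ hΛ0]; nlinarith
      linarith
  have hwF : w ∈ annL κ Λ O r := by
    constructor
    · rw [mem_ball]
      calc dist w O ≤ dist w z + dist z O := dist_triangle w z O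
        _ < κ * t + κ * r := by linarith
        _ ≤ Λ * (κ * r) := by nlinarith
    · intro hcon
      rw [mem_ball] at hcon
      have htri : dist z O ≤ dist z w + dist w O := dist_triangle z w O
      rw [dist_comm z w] at htri
      have h1 : r / Λ = r - κ * t := by
        rw [hκt]; field_simp; ring
      have h2 : dist w O ≥ dist z O - dist w z := by linarith
      have h3 : dist w O ≥ r - κ * t := by linarith
      rw [h1] at hcon
      linarith
  have hbdd : Bornology.IsBounded (annL κ Λ O r) :=
    (Metric.isBounded_ball (x := O) (r := Λ * (κ * r))).subset Set.diff_subset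
  calc t ≤ dist w z := hw2'
    _ ≤ Metric.diam (annL κ Λ O r) := Metric.dist_le_diam_of_mem hbdd hwF hzF

lemma relCap_le_of_test (μ : Measure X) (s : ℝ) {p : ℝ} (hp : 0 < p)
    {u : X → ℝ} {g : X → ℝ≥0∞} (hum : Measurable u) (hgs : IsSGradient μ s u g)
    (hgint : (∫⁻ x, g x ^ p ∂μ) < ⊤) (huqc : HajlaszQC μ s p u)
    {c : ℝ} (hc : 1 ≤ c) {E F : Set X} (hE : ∀ x ∈ E, 1 / c < |u x|)
    (hD : 1 ≤ ENNReal.ofReal (Metric.diam F ^ (s * p))) :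
    relCap μ s p E F ≤ ENNReal.ofReal c ^ p *
      ((∫⁻ x in F, ENNReal.ofReal |u x| ^ p ∂μ) + ∫⁻ x in F, g x ^ p ∂μ) := by
  have hc0 : (0:ℝ) < c := lt_of_lt_of_le one_pos hc
  obtain ⟨hgm, N, hN, hg⟩ := hgs
  set v : X → ℝ := fun x => c * |u x| with hv
  set gc : X → ℝ≥0∞ := fun x => ENNReal.ofReal c * g x with hgc
  have hgrad : IsSGradient μ s v gc := by
    refine ⟨hgm.const_mul _, N, hN, fun x hx y hy => ?_⟩
    have h1 : |v x - v y| = c * |(|u x| - |u y|)| := by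
      rw [hv]; simp only
      rw [← mul_sub, abs_mul, abs_of_nonneg hc0.le]
    calc ENNReal.ofReal |v x - v y|
        = ENNReal.ofReal c * ENNReal.ofReal |(|u x| - |u y|)| := by
          rw [h1, ENNReal.ofReal_mul hc0.le]
      _ ≤ ENNReal.ofReal c * ENNReal.ofReal |u x - u y| :=
          mul_le_mul_right (ENNReal.ofReal_le_ofReal (abs_abs_sub_abs_le_abs_sub _ _)) _
      _ ≤ ENNReal.ofReal c * (ENNReal.ofReal (dist x y ^ s) * (g x + g y)) :=
          mul_le_mul_right (hg x hx y hy) _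
      _ = ENNReal.ofReal (dist x y ^ s) * (gc x + gc y) := by
          rw [hgc]; simp only; ring
  have hgcint : ∀ (ν : Measure X),
      (∫⁻ x, gc x ^ p ∂ν) = ENNReal.ofReal c ^ p * ∫⁻ x, g x ^ p ∂ν := by
    intro ν
    simp_rw [hgc, ENNReal.mul_rpow_of_nonneg _ _ hp.le]
    exact lintegral_const_mul _ (hgm.pow_const p)
  have hvmem : MemHomHajlasz μ s p v := by
    refine ⟨hum.abs.const_mul c, gc, hgrad, ?_⟩
    rw [hgcint]
    exact ENNReal.mul_lt_top (ENNReal.rpow_lt_top_of_nonneg hp.le ENNReal.ofReal_ne_top) hgint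
  have hvqc : HajlaszQC μ s p v := by
    intro ε hε
    obtain ⟨E', hcap, hcont⟩ := huqc ε hε
    exact ⟨E', hcap, continuousOn_const.mul hcont.abs⟩
  have hv1 : ∀ x ∈ E, 1 ≤ v x := by
    intro x hx
    have := hE x hx
    rw [div_lt_iff₀ hc0] at this
    rw [hv]; simp only
    nlinarith
  refine le_trans (iInf₂_le v ⟨hvmem, hvqc, hv1⟩) ?_
  set D := ENNReal.ofReal (Metric.diam F ^ (s * p)) with hDdef
  set A := ∫⁻ x in F, ENNReal.ofReal |u x| ^ p ∂μ with hA
  set B := ∫⁻ x in F, g x ^ p ∂μ with hB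
  have hlp : lpNormP μ p v F = ENNReal.ofReal c ^ p * A := by
    rw [lpNormP, hA]
    have heq : ∀ x, ENNReal.ofReal |v x| ^ p
        = ENNReal.ofReal c ^ p * ENNReal.ofReal |u x| ^ p := by
      intro x
      rw [hv]; simp only
      rw [abs_mul, abs_of_nonneg hc0.le, ENNReal.ofReal_mul hc0.le, abs_abs,
        ENNReal.mul_rpow_of_nonneg _ _ hp.le]
    simp_rw [heq]
    exact lintegral_const_mul _ ((hum.abs.ennreal_ofReal).pow_const p)
  have hinner : (⨅ (g' : X → ℝ≥0∞) (_ : IsSGradient μ s v g'), ∫⁻ x in F, g' x ^ p ∂μ)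
      ≤ ENNReal.ofReal c ^ p * B := by
    refine le_trans (iInf₂_le gc hgrad) ?_
    rw [hgcint, hB]
  have hdiv : ENNReal.ofReal c ^ p * A / D ≤ ENNReal.ofReal c ^ p * A := by
    rw [div_eq_mul_inv]
    calc ENNReal.ofReal c ^ p * A * D⁻¹ ≤ ENNReal.ofReal c ^ p * A * 1 :=
          mul_le_mul_right (ENNReal.inv_le_one.mpr hD) _
      _ = ENNReal.ofReal c ^ p * A := mul_one _
  calc lpNormP μ p v F / D
        + ⨅ (g' : X → ℝ≥0∞) (_ : IsSGradient μ s v g'), ∫⁻ x in F, g' x ^ p ∂μ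
      ≤ ENNReal.ofReal c ^ p * A + ENNReal.ofReal c ^ p * B := by
        rw [hlp]; exact add_le_add hdiv hinner
    _ = ENNReal.ofReal c ^ p * (A + B) := (mul_add _ _ _).symm

end Aux
-- ==================== end auxiliary lemmas ====================

set_option maxHeartbeats 1000000
/-- Theorem 7.10: if `u ∈ M^{s,p}(X) = Ṁ^{s,p}(X) ∩ L^p(X)` is
`M^{s,p}`-quasicontinuous, then for every basepoint `O` there is an `(s,p)`-thin set
at infinity `E(O)` with `u(x) → 0` as `d(x,O) → ∞` along `X \ E(O)`. -/
theorem statement12 [BorelSpace X]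
    (μ : Measure X) (hcomp : μ.IsComplete)
    (hball : ∀ (x : X) (r : ℝ), 0 < r → 0 < μ (ball x r) ∧ μ (ball x r) < ⊤)
    (hdiam : EMetric.diam (Set.univ : Set X) = ⊤)
    (cμ : ℝ) (hcμ : 1 ≤ cμ)
    (hdoub : ∀ (x : X) (r : ℝ), 0 < r → μ (ball x (2 * r)) ≤ ENNReal.ofReal cμ * μ (ball x r))
    (cR κ : ℝ) (hcR0 : 0 < cR) (hcR1 : cR < 1) (hκ : 1 < κ)
    (hrev : ∀ (x : X) (r : ℝ), 0 < r → μ (ball x r) ≤ ENNReal.ofReal cR * μ (ball x (κ * r)))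
    (s p : ℝ) (hs0 : 0 < s) (hs1 : s ≤ 1) (hp : 0 < p)
    (u : X → ℝ) (hu : MemHomHajlasz μ s p u) (huLp : lpNormP μ p u Set.univ < ⊤)
    (huqc : HajlaszQC μ s p u) :
    ∀ O : X, ∃ E : Set X, ThinAtInfinity μ s p κ O E ∧ TendstoOutside O E u 0 := by
  classical
  intro O
  have hum : Measurable u := hu.1
  obtain ⟨-, g, hgs, hgint⟩ := hu
  have hgm : Measurable g := hgs.1
  have hκ0 : (0:ℝ) < κ := lt_trans one_pos hκ
  set h : X → ℝ≥0∞ := fun x => ENNReal.ofReal |u x| ^ p + g x ^ p with hhdef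
  have hupm : Measurable (fun x => ENNReal.ofReal |u x| ^ p) :=
    (hum.abs.ennreal_ofReal).pow_const p
  have hhm : Measurable h := hupm.add (hgm.pow_const p)
  set ν0 : Measure X := μ.withDensity h with hν0
  have hν0top : ν0 Set.univ < ⊤ := by
    rw [hν0, withDensity_apply _ MeasurableSet.univ, Measure.restrict_univ, hhdef,
      lintegral_add_left hupm]
    refine ENNReal.add_lt_top.mpr ⟨?_, hgint⟩
    have := huLp
    rwa [lpNormP, Measure.restrict_univ] at this
  set T : ℝ → ℝ≥0∞ := fun ρ => ν0 ((ball O ρ)ᶜ) with hTdef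
  have hTanti : Antitone T := fun ρ1 ρ2 h12 =>
    measure_mono (Set.compl_subset_compl.mpr (ball_subset_ball h12))
  have hTtend : Tendsto (fun n : ℕ => T n) atTop (𝓝 0) := by
    have h1 : Tendsto (fun n : ℕ => ν0 ((ball O (n:ℝ))ᶜ)) atTop
        (𝓝 (ν0 (⋂ n : ℕ, (ball O (n:ℝ))ᶜ))) := by
      refine tendsto_measure_iInter_atTop (fun n => (measurableSet_ball.compl).nullMeasurableSet)
        (fun n1 n2 h12 => Set.compl_subset_compl.mpr
          (ball_subset_ball (by exact_mod_cast h12))) ⟨0, ?_⟩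
      exact (lt_of_le_of_lt (measure_mono (Set.subset_univ _)) hν0top).ne
    have h2 : (⋂ n : ℕ, (ball O (n:ℝ))ᶜ) = ∅ := by
      ext x
      simp only [Set.mem_iInter, Set.mem_compl_iff, mem_ball, not_lt, Set.mem_empty_iff_false,
        iff_false, not_forall, not_le]
      obtain ⟨n, hn⟩ := exists_nat_gt (dist x O)
      exact ⟨n, hn⟩
    rw [h2, measure_empty] at h1
    exact h1
  have hTsel : ∀ δ : ℝ≥0∞, δ ≠ 0 → ∃ ρ0 : ℝ, ∀ ρ, ρ0 ≤ ρ → T ρ ≤ δ := by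
    intro δ hδ
    obtain ⟨n0, hn0⟩ := (ENNReal.tendsto_atTop_zero.mp hTtend) δ (zero_lt_iff.mpr hδ)
    exact ⟨n0, fun ρ hρ => le_trans (hTanti hρ) (hn0 n0 le_rfl)⟩
  -- choice of radii R k
  have hRex : ∀ k : ℕ, ∃ Rk : ℝ, ((k:ℝ) ≤ Rk) ∧
      ENNReal.ofReal ((k:ℝ)+1) ^ p * T (Rk / ((k:ℝ)+1)) ≤ 2⁻¹ ^ k := by
    intro k
    set c := ENNReal.ofReal ((k:ℝ)+1) ^ p with hcdef
    have hc0 : c ≠ 0 := by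
      rw [hcdef]
      exact (ENNReal.rpow_pos (ENNReal.ofReal_pos.mpr (by positivity)) ENNReal.ofReal_ne_top).ne'
    have hct : c ≠ ⊤ := (ENNReal.rpow_lt_top_of_nonneg hp.le ENNReal.ofReal_ne_top).ne
    have hδ : (2⁻¹ : ℝ≥0∞) ^ k / c ≠ 0 := by
      refine (ENNReal.div_pos ?_ hct).ne'
      exact pow_ne_zero k (ENNReal.inv_ne_zero.mpr ENNReal.ofNat_ne_top)
    obtain ⟨ρ0, hρ0⟩ := hTsel _ hδ
    have hk1 : (0:ℝ) < (k:ℝ)+1 := by positivity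
    refine ⟨max (k:ℝ) (((k:ℝ)+1) * max ρ0 0), le_max_left _ _, ?_⟩
    have harg : max ρ0 0 ≤ max (k:ℝ) (((k:ℝ)+1) * max ρ0 0) / ((k:ℝ)+1) := by
      rw [le_div_iff₀ hk1]
      calc max ρ0 0 * ((k:ℝ)+1) = ((k:ℝ)+1) * max ρ0 0 := mul_comm _ _
        _ ≤ _ := le_max_right _ _
    have hT1 : T (max (k:ℝ) (((k:ℝ)+1) * max ρ0 0) / ((k:ℝ)+1)) ≤ 2⁻¹ ^ k / c := by
      refine le_trans (hTanti ?_) (hρ0 (max ρ0 0) (le_max_left _ _))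
      exact harg
    calc c * T (max (k:ℝ) (((k:ℝ)+1) * max ρ0 0) / ((k:ℝ)+1))
        ≤ c * (2⁻¹ ^ k / c) := mul_le_mul_right hT1 c
      _ = 2⁻¹ ^ k := ENNReal.mul_div_cancel hc0 hct
  choose R hR1 hR2 using hRex
  set E : Set X := ⋃ k : ℕ, {x : X | R k ≤ dist x O ∧ 1/((k:ℝ)+1) < |u x|} with hEdef
  refine ⟨E, ?_, ?_⟩
  · -- ThinAtInfinity
    intro Λ hΛ
    have hΛ0 : (0:ℝ) < Λ := lt_trans one_pos hΛ
    have hΛ1 : (0:ℝ) < Λ - 1 := by linarith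
    have hκΛ : (0:ℝ) < κ * Λ := by positivity
    obtain ⟨C, hC⟩ : ∃ C : ℕ, Λ * Λ * κ ≤ κ ^ C := by
      obtain ⟨C, hC⟩ := pow_unbounded_of_one_lt (Λ * Λ * κ) hκ
      exact ⟨C, hC.le⟩
    have hC0 : C ≠ 0 := by
      intro hc
      rw [hc, pow_zero] at hC
      nlinarith
    obtain ⟨m0, hm0⟩ : ∃ m0 : ℕ, κ * Λ / (Λ - 1) ≤ κ ^ m0 := by
      obtain ⟨m0, hm⟩ := pow_unbounded_of_one_lt (κ * Λ / (Λ - 1)) hκ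
      exact ⟨m0, hm.le⟩
    -- the weight function
    set f : ℝ → ℕ := fun t => Nat.findGreatest (fun k => R k ≤ κ * Λ * t) ⌈κ * Λ * t⌉₊
      with hfdef
    have hfP : ∀ t : ℝ, f t ≠ 0 → R (f t) ≤ κ * Λ * t := by
      intro t h0
      have := (Nat.findGreatest_eq_iff.mp
        (rfl : Nat.findGreatest (fun k => R k ≤ κ * Λ * t) ⌈κ * Λ * t⌉₊ = f t)).2.1
      exact this h0
    have hfle : ∀ (k : ℕ) (t : ℝ), R k ≤ κ * Λ * t → k ≤ f t := by
      intro k t hk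
      refine Nat.le_findGreatest ?_ hk
      have h1 : ((k:ℝ)) ≤ κ * Λ * t := le_trans (hR1 k) hk
      calc k = ⌈(k:ℝ)⌉₊ := (Nat.ceil_natCast k).symm
        _ ≤ ⌈κ * Λ * t⌉₊ := Nat.ceil_le_ceil h1
    have hfmono : Monotone f := by
      intro t1 t2 h12
      rcases Nat.eq_zero_or_pos (f t1) with h0 | hpos
      · rw [h0]; exact Nat.zero_le _
      · have hP1 : R (f t1) ≤ κ * Λ * t1 := hfP t1 hpos.ne'
        have hP2 : R (f t1) ≤ κ * Λ * t2 :=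
          le_trans hP1 (by nlinarith)
        exact hfle _ _ hP2
    have hNm : Measurable (fun x : X => f (dist x O)) :=
      hfmono.measurable.comp (continuous_id.dist continuous_const).measurable
    set Nn : X → ℕ := fun x => f (dist x O) with hNdef
    set W : X → ℝ≥0∞ := fun x => ENNReal.ofReal ((Nn x : ℝ) + 1) ^ p * h x with hWdef
    have hWm : Measurable W := by
      refine Measurable.mul ?_ hhm
      exact (measurable_from_top (f := fun k : ℕ => ENNReal.ofReal ((k:ℝ)+1) ^ p)).comp hNm
    set ν : Measure X := μ.withDensity W with hνdef
    -- key 1 : termwise bound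
    have key1 : ∀ m : ℕ, m0 ≤ m → ∀ j : ℕ,
        relCap μ s p (E ∩ ann κ O (κ^(m+j))) (annL κ Λ O (κ^(m+j)))
          ≤ ν (annL κ Λ O (κ^(m+j))) := by
      intro m hm j
      set r : ℝ := κ^(m+j) with hrdef
      have hr0 : 0 < r := pow_pos hκ0 _
      by_cases hEA : E ∩ ann κ O r = ∅
      · rw [relCap_eq_zero_of_empty μ s hp hEA]
        exact zero_le
      · obtain ⟨x0, hx0E, hx0A⟩ := Set.nonempty_iff_ne_empty.mpr hEA
        set K := Nat.findGreatest (fun k => R k ≤ κ * r) ⌈κ * r⌉₊ with hKdef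
        have hx0A' : dist x0 O < κ * r := mem_ball.mp hx0A.1
        obtain ⟨k0, hk0⟩ := Set.mem_iUnion.mp hx0E
        have hk0R : R k0 ≤ κ * r := le_trans hk0.1 hx0A'.le
        have hk0b : k0 ≤ ⌈κ * r⌉₊ := by
          have h1 : ((k0:ℝ)) ≤ κ * r := le_trans (hR1 k0) hk0R
          calc k0 = ⌈(k0:ℝ)⌉₊ := (Nat.ceil_natCast k0).symm
            _ ≤ ⌈κ * r⌉₊ := Nat.ceil_le_ceil h1
        have hPK : R K ≤ κ * r :=
          Nat.findGreatest_spec (P := fun k => R k ≤ κ * r) hk0b hk0R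
        have hKb : ∀ x ∈ E ∩ ann κ O r, 1 / ((K:ℝ)+1) < |u x| := by
          rintro x ⟨hxE, hxA⟩
          obtain ⟨k, hk⟩ := Set.mem_iUnion.mp hxE
          have hxd : dist x O < κ * r := mem_ball.mp hxA.1
          have hkR : R k ≤ κ * r := le_trans hk.1 hxd.le
          have hkb : k ≤ ⌈κ * r⌉₊ := by
            have h1 : ((k:ℝ)) ≤ κ * r := le_trans (hR1 k) hkR
            calc k = ⌈(k:ℝ)⌉₊ := (Nat.ceil_natCast k).symm
              _ ≤ ⌈κ * r⌉₊ := Nat.ceil_le_ceil h1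
          have hkK : k ≤ K := Nat.le_findGreatest (P := fun k => R k ≤ κ * r) hkb hkR
          refine lt_of_le_of_lt ?_ hk.2
          apply one_div_le_one_div_of_le (by positivity)
          have : ((k:ℝ)) ≤ (K:ℝ) := by exact_mod_cast hkK
          linarith
        have hrm0 : κ ^ m0 ≤ r := by
          rw [hrdef]
          exact pow_le_pow_right₀ hκ.le (le_trans hm (Nat.le_add_right m j))
        have hdiam : 1 ≤ ENNReal.ofReal (Metric.diam (annL κ Λ O r) ^ (s * p)) := by
          have h1 : (Λ - 1) * r / (Λ * κ) ≤ Metric.diam (annL κ Λ O r) :=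
            diam_annL_ge μ hball hcR1 hκ hrev hΛ hr0 hx0A
          have h2 : (1:ℝ) ≤ (Λ - 1) * r / (Λ * κ) := by
            rw [le_div_iff₀ (by positivity)]
            have h3 : κ * Λ ≤ r * (Λ - 1) := by
              have h4 := hm0
              rw [div_le_iff₀ hΛ1] at h4
              nlinarith [hrm0]
            nlinarith
          have h3 : (1:ℝ) ≤ Metric.diam (annL κ Λ O r) ^ (s*p) :=
            Real.one_le_rpow (le_trans h2 h1) (by positivity)
          exact ENNReal.one_le_ofReal.mpr h3
        have hKc : (1:ℝ) ≤ (K:ℝ) + 1 := by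
          have : (0:ℝ) ≤ (K:ℝ) := Nat.cast_nonneg K
          linarith
        have hbound := relCap_le_of_test μ s hp hum hgs hgint huqc hKc hKb hdiam
        refine le_trans hbound ?_
        have hFmeas : MeasurableSet (annL κ Λ O r) :=
          measurableSet_ball.diff measurableSet_ball
        rw [hνdef, withDensity_apply W hFmeas]
        calc ENNReal.ofReal ((K:ℝ)+1) ^ p *
              ((∫⁻ x in annL κ Λ O r, ENNReal.ofReal |u x| ^ p ∂μ)
                + ∫⁻ x in annL κ Λ O r, g x ^ p ∂μ)
            = ∫⁻ x in annL κ Λ O r, ENNReal.ofReal ((K:ℝ)+1) ^ p * h x ∂μ := by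
              rw [hhdef]
              simp only
              rw [lintegral_const_mul (f := fun x => ENNReal.ofReal |u x| ^ p + g x ^ p) _
                  (hupm.add (hgm.pow_const p)),
                lintegral_add_left hupm]
          _ ≤ ∫⁻ x in annL κ Λ O r, W x ∂μ := by
              refine setLIntegral_mono hWm ?_
              intro x hx
              have hxd : r / Λ ≤ dist x O := not_lt.mp (fun hc => hx.2 (mem_ball.mpr hc))
              have hκr : κ * r ≤ κ * Λ * dist x O := by
                rw [div_le_iff₀ hΛ0] at hxd
                nlinarith
              have hKN : K ≤ Nn x := hfle K (dist x O) (le_trans hPK hκr)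
              refine mul_le_mul_left ?_ _
              refine ENNReal.rpow_le_rpow (ENNReal.ofReal_le_ofReal ?_) hp.le
              have : ((K:ℝ)) ≤ ((Nn x : ℕ):ℝ) := by exact_mod_cast hKN
              linarith
    -- key 2 : summation bound
    have key2 : ∀ m : ℕ, (∑' j : ℕ, ν (annL κ Λ O (κ^(m+j))))
        ≤ (C:ℝ≥0∞) * ν ((ball O (κ^m / Λ))ᶜ) := by
      intro m
      have hFmeas : ∀ j : ℕ, MeasurableSet (annL κ Λ O (κ^(m+j))) :=
        fun j => measurableSet_ball.diff measurableSet_ball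
      have hBmeas : MeasurableSet ((ball O (κ^m / Λ))ᶜ) := measurableSet_ball.compl
      have step1 : (∑' j : ℕ, ν (annL κ Λ O (κ^(m+j))))
          = ∑' j : ℕ, ∫⁻ x, (annL κ Λ O (κ^(m+j))).indicator W x ∂μ := by
        refine tsum_congr (fun j => ?_)
        rw [hνdef, withDensity_apply W (hFmeas j), lintegral_indicator (hFmeas j)]
      have step2 : (∑' j : ℕ, ∫⁻ x, (annL κ Λ O (κ^(m+j))).indicator W x ∂μ)
          = ∫⁻ x, ∑' j : ℕ, (annL κ Λ O (κ^(m+j))).indicator W x ∂μ :=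
        (lintegral_tsum (fun j => (hWm.indicator (hFmeas j)).aemeasurable)).symm
      have step3 : (∫⁻ x, ∑' j : ℕ, (annL κ Λ O (κ^(m+j))).indicator W x ∂μ)
          ≤ ∫⁻ x, (C:ℝ≥0∞) * ((ball O (κ^m / Λ))ᶜ).indicator W x ∂μ := by
        refine lintegral_mono (fun x => ?_)
        by_cases hex : ∃ j : ℕ, x ∈ annL κ Λ O (κ^(m+j))
        · set j0 := Nat.find hex with hj0def
          have hj0 : x ∈ annL κ Λ O (κ^(m+j0)) := Nat.find_spec hex
          have hd1 : κ^(m+j0) / Λ ≤ dist x O :=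
            not_lt.mp (fun hc => hj0.2 (mem_ball.mpr hc))
          have hxball : x ∈ (ball O (κ^m / Λ))ᶜ := by
            intro hc
            have hc' : dist x O < κ^m / Λ := mem_ball.mp hc
            have hmono : (κ:ℝ)^m ≤ κ^(m+j0) := pow_le_pow_right₀ hκ.le (Nat.le_add_right m j0)
            have hdd : (κ:ℝ)^m / Λ ≤ κ^(m+j0) / Λ := by gcongr
            linarith
          have hterm : ∀ j : ℕ, (annL κ Λ O (κ^(m+j))).indicator W x
              ≤ (Set.Ico j0 (j0 + C)).indicator (fun _ => W x) j := by
            intro j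
            by_cases hj : x ∈ annL κ Λ O (κ^(m+j))
            · rw [Set.indicator_of_mem hj]
              have hj0le : j0 ≤ j := Nat.find_min' hex hj
              have hjlt : j < j0 + C := by
                have h1 : κ^(m+j) / Λ ≤ dist x O :=
                  not_lt.mp (fun hc => hj.2 (mem_ball.mpr hc))
                have h2 : dist x O < Λ * (κ * κ^(m+j0)) := mem_ball.mp hj0.1
                have h3 : (κ:ℝ)^(m+j) ≤ Λ * dist x O := by
                  rw [div_le_iff₀ hΛ0] at h1; nlinarith
                have h4 : (κ:ℝ)^(m+j) < (Λ * Λ * κ) * κ^(m+j0) := by nlinarith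
                have h5 : (κ:ℝ)^(m+j) < κ^(m+j0+C) := by
                  have hp0 : (0:ℝ) < κ^(m+j0) := pow_pos hκ0 _
                  calc (κ:ℝ)^(m+j) < (Λ*Λ*κ) * κ^(m+j0) := h4
                    _ ≤ κ^C * κ^(m+j0) := by nlinarith
                    _ = κ^(m+j0+C) := by rw [← pow_add]; ring_nf
                have h6 : m+j < m+j0+C := (pow_lt_pow_iff_right₀ hκ).mp h5
                omega
              rw [Set.indicator_of_mem (Set.mem_Ico.mpr ⟨hj0le, hjlt⟩)]
            · rw [Set.indicator_of_notMem hj]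
              exact zero_le
          calc (∑' j : ℕ, (annL κ Λ O (κ^(m+j))).indicator W x)
              ≤ ∑' j : ℕ, (Set.Ico j0 (j0+C)).indicator (fun _ => W x) j :=
                ENNReal.tsum_le_tsum hterm
            _ = ∑ j ∈ Finset.Ico j0 (j0+C), (Set.Ico j0 (j0+C)).indicator (fun _ => W x) j := by
                refine tsum_eq_sum ?_
                intro j hj
                exact Set.indicator_of_notMem (by simpa [Set.mem_Ico, Finset.mem_Ico] using hj) _
            _ = ∑ j ∈ Finset.Ico j0 (j0+C), W x := by
                refine Finset.sum_congr rfl (fun j hj => ?_)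
                exact Set.indicator_of_mem (by simpa [Set.mem_Ico, Finset.mem_Ico] using hj) _
            _ = (C:ℝ≥0∞) * W x := by
                simp [Finset.sum_const, Nat.card_Ico]
            _ = (C:ℝ≥0∞) * ((ball O (κ^m / Λ))ᶜ).indicator W x := by
                rw [Set.indicator_of_mem hxball]
        · have hz : ∀ j : ℕ, (annL κ Λ O (κ^(m+j))).indicator W x = 0 :=
            fun j => Set.indicator_of_notMem (fun hc => hex ⟨j, hc⟩) W
          rw [tsum_congr hz, tsum_zero]
          exact zero_le
      have step4 : (∫⁻ x, (C:ℝ≥0∞) * ((ball O (κ^m / Λ))ᶜ).indicator W x ∂μ)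
          = (C:ℝ≥0∞) * ν ((ball O (κ^m / Λ))ᶜ) := by
        rw [lintegral_const_mul _ (hWm.indicator hBmeas), lintegral_indicator hBmeas,
          hνdef, withDensity_apply W hBmeas]
      rw [step1, step2]
      exact le_trans step3 (le_of_eq step4)
    -- key 3 : smallness of the weighted tail
    have hDkbound : ∀ k : ℕ, κ * Λ ≤ (k:ℝ) + 1 → 1 ≤ k →
        ν {x : X | Nn x = k} ≤ 2⁻¹ ^ k := by
      intro k hkΛ hk1
      have hDm : MeasurableSet {x : X | Nn x = k} := hNm (measurableSet_singleton k)
      have hsub : {x : X | Nn x = k} ⊆ (ball O (R k / (κ * Λ)))ᶜ := by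
        intro x hx
        have hfx : f (dist x O) = k := hx
        have hne : f (dist x O) ≠ 0 := by rw [hfx]; omega
        have hPx := hfP (dist x O) hne
        rw [hfx] at hPx
        intro hc
        have hc' : dist x O < R k / (κ * Λ) := mem_ball.mp hc
        rw [lt_div_iff₀ hκΛ] at hc'
        nlinarith
      have heq : ν {x : X | Nn x = k}
          = ENNReal.ofReal ((k:ℝ)+1) ^ p * ∫⁻ x in {x : X | Nn x = k}, h x ∂μ := by
        rw [hνdef, withDensity_apply W hDm, ← lintegral_const_mul _ hhm]
        refine setLIntegral_congr_fun hDm (fun x hx => ?_)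
        have hfx : Nn x = k := hx
        rw [hWdef]
        simp only
        rw [hfx]
      have hint : (∫⁻ x in {x : X | Nn x = k}, h x ∂μ) ≤ T (R k / ((k:ℝ)+1)) := by
        have hRk0 : (0:ℝ) ≤ R k := le_trans (Nat.cast_nonneg k) (hR1 k)
        calc (∫⁻ x in {x : X | Nn x = k}, h x ∂μ)
            ≤ ∫⁻ x in (ball O (R k / (κ * Λ)))ᶜ, h x ∂μ := lintegral_mono_set hsub
          _ = T (R k / (κ * Λ)) := by
              rw [hTdef]
              simp only
              rw [hν0, withDensity_apply h measurableSet_ball.compl]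
          _ ≤ T (R k / ((k:ℝ)+1)) := by
              refine hTanti ?_
              gcongr
      calc ν {x : X | Nn x = k}
          = ENNReal.ofReal ((k:ℝ)+1) ^ p * ∫⁻ x in {x : X | Nn x = k}, h x ∂μ := heq
        _ ≤ ENNReal.ofReal ((k:ℝ)+1) ^ p * T (R k / ((k:ℝ)+1)) := mul_le_mul_right hint _
        _ ≤ 2⁻¹ ^ k := hR2 k
    have hνsmall : ∀ δ : ℝ≥0∞, δ ≠ 0 → ∃ ρ1 : ℝ, ∀ ρ, ρ1 ≤ ρ → ν ((ball O ρ)ᶜ) ≤ δ := by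
      intro δ hδ
      obtain ⟨n1, hn1⟩ := ENNReal.exists_inv_two_pow_lt
        (show δ/2 ≠ 0 from (ENNReal.div_pos hδ ENNReal.ofNat_ne_top).ne')
      set k1 : ℕ := max (n1+1) (max 1 ⌈κ*Λ⌉₊) with hk1def
      have hk1κΛ : κ * Λ ≤ (k1:ℝ) := by
        have h1 : (⌈κ*Λ⌉₊ : ℕ) ≤ k1 := le_trans (le_max_right _ _) (le_max_right _ _)
        calc κ * Λ ≤ (⌈κ*Λ⌉₊ : ℝ) := Nat.le_ceil _
          _ ≤ (k1:ℝ) := by exact_mod_cast h1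
      have hk11 : 1 ≤ k1 := le_trans (le_max_left _ _) (le_max_right _ _)
      have hk1n1 : n1 + 1 ≤ k1 := le_max_left _ _
      have htail : ν {x : X | k1 ≤ Nn x} ≤ δ / 2 := by
        have hsub : {x : X | k1 ≤ Nn x} ⊆ ⋃ j : ℕ, {x : X | Nn x = k1 + j} := by
          intro x hx
          have hx' : k1 ≤ Nn x := hx
          exact Set.mem_iUnion.mpr ⟨Nn x - k1, by simp only [Set.mem_setOf_eq]; omega⟩
        calc ν {x : X | k1 ≤ Nn x} ≤ ∑' j : ℕ, ν {x : X | Nn x = k1 + j} :=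
              le_trans (measure_mono hsub) (measure_iUnion_le _)
          _ ≤ ∑' j : ℕ, (2⁻¹ : ℝ≥0∞) ^ (k1 + j) := by
              refine ENNReal.tsum_le_tsum (fun j => hDkbound (k1+j) ?_
                (le_trans hk11 (Nat.le_add_right _ _)))
              have h0 : (0:ℝ) ≤ (j:ℝ) := Nat.cast_nonneg j
              have h1 : (k1:ℝ) ≤ ((k1+j:ℕ):ℝ) + 1 := by push_cast; linarith
              linarith
          _ = (2⁻¹ : ℝ≥0∞) ^ k1 * ∑' j : ℕ, (2⁻¹:ℝ≥0∞) ^ j := by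
              simp_rw [pow_add]; exact ENNReal.tsum_mul_left
          _ = (2⁻¹ : ℝ≥0∞) ^ k1 * 2 := by
              rw [ENNReal.tsum_geometric, ENNReal.one_sub_inv_two, inv_inv]
          _ ≤ (2⁻¹ : ℝ≥0∞) ^ (n1+1) * 2 := by
              refine mul_le_mul_left (pow_le_pow_of_le_one (zero_le) ?_ hk1n1) _
              exact ENNReal.inv_le_one.mpr one_le_two
          _ = (2⁻¹ : ℝ≥0∞) ^ n1 := by
              rw [pow_succ, mul_assoc, ENNReal.inv_mul_cancel two_ne_zero ENNReal.ofNat_ne_top,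
                mul_one]
          _ ≤ δ / 2 := hn1.le
      set c1 := ENNReal.ofReal ((k1:ℝ)) ^ p with hc1def
      have hk1R : (0:ℝ) < (k1:ℝ) := by exact_mod_cast hk11
      have hc10 : c1 ≠ 0 :=
        (ENNReal.rpow_pos (ENNReal.ofReal_pos.mpr hk1R) ENNReal.ofReal_ne_top).ne'
      have hc1t : c1 ≠ ⊤ := (ENNReal.rpow_lt_top_of_nonneg hp.le ENNReal.ofReal_ne_top).ne
      have hδ2 : (δ/2) / c1 ≠ 0 :=
        (ENNReal.div_pos (ENNReal.div_pos hδ ENNReal.ofNat_ne_top).ne' hc1t).ne'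
      obtain ⟨ρ0, hρ0⟩ := hTsel _ hδ2
      refine ⟨ρ0, fun ρ hρ => ?_⟩
      have hA1meas : MeasurableSet ((ball O ρ)ᶜ ∩ {x : X | Nn x < k1}) :=
        measurableSet_ball.compl.inter (hNm measurableSet_Iio)
      have hsplit : ν ((ball O ρ)ᶜ)
          ≤ ν ((ball O ρ)ᶜ ∩ {x : X | Nn x < k1}) + ν {x : X | k1 ≤ Nn x} := by
        refine le_trans (measure_mono ?_) (measure_union_le _ _)
        intro x hx
        by_cases hN : Nn x < k1
        · exact Or.inl ⟨hx, hN⟩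
        · exact Or.inr (not_lt.mp hN)
      have hfar : ν ((ball O ρ)ᶜ ∩ {x : X | Nn x < k1}) ≤ c1 * T ρ := by
        rw [hνdef, withDensity_apply W hA1meas]
        calc (∫⁻ x in (ball O ρ)ᶜ ∩ {x : X | Nn x < k1}, W x ∂μ)
            ≤ ∫⁻ x in (ball O ρ)ᶜ ∩ {x : X | Nn x < k1}, c1 * h x ∂μ := by
              refine setLIntegral_mono (hhm.const_mul _) ?_
              intro x hx
              rw [hWdef]
              simp only
              refine mul_le_mul_left ?_ _
              rw [hc1def]
              refine ENNReal.rpow_le_rpow (ENNReal.ofReal_le_ofReal ?_) hp.le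
              have h1 : Nn x + 1 ≤ k1 := hx.2
              exact_mod_cast h1
          _ ≤ ∫⁻ x in (ball O ρ)ᶜ, c1 * h x ∂μ := lintegral_mono_set Set.inter_subset_left
          _ = c1 * T ρ := by
              rw [lintegral_const_mul _ hhm, hTdef]
              simp only
              rw [hν0, withDensity_apply h measurableSet_ball.compl]
      have hTρ : T ρ ≤ (δ/2)/c1 := hρ0 ρ hρ
      calc ν ((ball O ρ)ᶜ)
          ≤ ν ((ball O ρ)ᶜ ∩ {x : X | Nn x < k1}) + ν {x : X | k1 ≤ Nn x} := hsplit
        _ ≤ c1 * ((δ/2)/c1) + δ/2 :=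
            add_le_add (le_trans hfar (mul_le_mul_right hTρ _)) htail
        _ = δ/2 + δ/2 := by rw [ENNReal.mul_div_cancel hc10 hc1t]
        _ = δ := ENNReal.add_halves δ
    -- final assembly
    rw [ENNReal.tendsto_atTop_zero]
    intro ε hε
    have hCne : (C:ℝ≥0∞) ≠ 0 := Nat.cast_ne_zero.mpr hC0
    have hCnt : (C:ℝ≥0∞) ≠ ⊤ := ENNReal.natCast_ne_top C
    obtain ⟨ρ1, hρ1⟩ := hνsmall (ε / C) (ENNReal.div_pos hε.ne' hCnt).ne'
    obtain ⟨m1, hm1⟩ : ∃ m1 : ℕ, ρ1 * Λ ≤ κ ^ m1 := by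
      obtain ⟨m1, hm⟩ := pow_unbounded_of_one_lt (ρ1 * Λ) hκ
      exact ⟨m1, hm.le⟩
    refine ⟨max m0 m1, fun m hm => ?_⟩
    have hmm0 : m0 ≤ m := le_trans (le_max_left _ _) hm
    have hmm1 : m1 ≤ m := le_trans (le_max_right _ _) hm
    have hρκ : ρ1 ≤ κ ^ m / Λ := by
      rw [le_div_iff₀ hΛ0]
      calc ρ1 * Λ ≤ κ ^ m1 := hm1
        _ ≤ κ ^ m := pow_le_pow_right₀ hκ.le hmm1
    calc (∑' j : ℕ, relCap μ s p (E ∩ ann κ O (κ^(m+j))) (annL κ Λ O (κ^(m+j))))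
        ≤ ∑' j : ℕ, ν (annL κ Λ O (κ^(m+j))) := ENNReal.tsum_le_tsum (key1 m hmm0)
      _ ≤ (C:ℝ≥0∞) * ν ((ball O (κ^m / Λ))ᶜ) := key2 m
      _ ≤ (C:ℝ≥0∞) * (ε / C) := mul_le_mul_right (hρ1 _ hρκ) _
      _ = ε := ENNReal.mul_div_cancel hCne hCnt
  · -- TendstoOutside
    intro ε hε
    obtain ⟨k, hk⟩ := exists_nat_one_div_lt hε
    obtain ⟨n, hn⟩ := exists_nat_ge (R k)
    refine ⟨n, fun x hx hdx => ?_⟩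
    have hxk : ¬(R k ≤ dist x O ∧ 1/((k:ℝ)+1) < |u x|) := by
      intro hcon
      exact hx (Set.mem_iUnion.mpr ⟨k, hcon⟩)
    push_neg at hxk
    have h1 : R k ≤ dist x O := le_trans hn hdx.le
    have h2 : |u x| ≤ 1/((k:ℝ)+1) := hxk h1
    rw [sub_zero]
    exact lt_of_le_of_lt h2 hk


end Paper
end
end

section
/- Let 0 < s ≤ 1 and 0 < p, q < ∞. Then Ẇ^{s,p}_q(X) ⊂ Ṁ^{s,p}(X), and there is a constant C = C(q, c_μ) > 0 such that ‖u‖_{Ṁ^{s,p}(X)} ≤ C ‖u‖_{Ẇ^{s,p}_q(X)} for all u ∈ Ẇ^{s,p}_q(X). -/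
open MeasureTheory Metric Set Filter
open scoped ENNReal NNReal Topology

noncomputable section
namespace Paper

variable {X : Type*} [MetricSpace X] [MeasurableSpace X]

section Auxiliary

private lemma add_rpow_le_two_rpow (a b : ℝ≥0∞) {r : ℝ} (hr : 0 ≤ r) :
    (a + b) ^ r ≤ 2 ^ r * (a ^ r + b ^ r) := by
  have h1 : a + b ≤ 2 * (a ⊔ b) := by
    rw [two_mul]
    exact add_le_add le_sup_left le_sup_right
  have h2 : (a ⊔ b) ^ r ≤ a ^ r + b ^ r := by
    rcases le_total a b with h | h
    · rw [sup_eq_right.2 h]; exact le_add_self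
    · rw [sup_eq_left.2 h]; exact le_self_add
  calc (a + b) ^ r ≤ (2 * (a ⊔ b)) ^ r := ENNReal.rpow_le_rpow h1 hr
    _ = 2 ^ r * (a ⊔ b) ^ r := ENNReal.mul_rpow_of_nonneg _ _ hr
    _ ≤ 2 ^ r * (a ^ r + b ^ r) := by gcongr

private lemma doub_iter (μ : Measure X) (cμ : ℝ)
    (hdoub : ∀ (x : X) (r : ℝ), 0 < r → μ (ball x (2 * r)) ≤ ENNReal.ofReal cμ * μ (ball x r)) :
    ∀ (k : ℕ) (x : X) (r : ℝ), 0 < r →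
      μ (ball x (2 ^ k * r)) ≤ (ENNReal.ofReal cμ) ^ k * μ (ball x r) := by
  intro k
  induction k with
  | zero => intro x r _; simp
  | succ k ih =>
    intro x r hr
    have h1 : (2:ℝ) ^ (k+1) * r = 2 ^ k * (2 * r) := by ring
    rw [h1]
    calc μ (ball x (2 ^ k * (2 * r)))
        ≤ (ENNReal.ofReal cμ) ^ k * μ (ball x (2 * r)) := ih x (2*r) (by linarith)
      _ ≤ (ENNReal.ofReal cμ) ^ k * (ENNReal.ofReal cμ * μ (ball x r)) := by
          gcongr
          exact hdoub x r hr
      _ = (ENNReal.ofReal cμ) ^ (k+1) * μ (ball x r) := by ring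

private lemma sep_of_doubling [BorelSpace X] (μ : Measure X)
    (hball : ∀ (x : X) (r : ℝ), 0 < r → 0 < μ (ball x r) ∧ μ (ball x r) < ⊤)
    (cμ : ℝ)
    (hdoub : ∀ (x : X) (r : ℝ), 0 < r → μ (ball x (2 * r)) ≤ ENNReal.ofReal cμ * μ (ball x r)) :
    TopologicalSpace.SeparableSpace X := by
  have htb : ∀ (x₀ : X) (R : ℝ), TotallyBounded (ball x₀ R) := by
    intro x₀ R
    by_contra hc
    rw [Metric.totallyBounded_iff] at hc
    push_neg at hc
    obtain ⟨ε, hε, hcov⟩ := hc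
    haveI : Std.Symm (fun a b : X => ε ≤ dist a b) := ⟨fun a b h => by rwa [dist_comm]⟩
    obtain ⟨f, hfmem, hfsep⟩ := exists_seq_of_forall_finset_exists'
      (fun x => x ∈ ball x₀ R) (fun a b => ε ≤ dist a b) (by
        intro t _
        obtain ⟨x, hx, hx'⟩ := Set.not_subset.1 (hcov ↑t t.finite_toSet)
        refine ⟨x, hx, fun z hz => ?_⟩
        by_contra hlt
        rw [not_le] at hlt
        exact hx' (Set.mem_biUnion hz (by rwa [mem_ball, dist_comm])))
    have hR : 0 < R := by
      by_contra h
      rw [not_lt] at h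
      have := hfmem 0
      rw [ball_eq_empty.2 h] at this
      exact this
    obtain ⟨k, hk⟩ := pow_unbounded_of_one_lt (2*R / (ε/2)) (one_lt_two : (1:ℝ) < 2)
    have hk' : 2*R ≤ 2^k * (ε/2) := by
      rw [div_lt_iff₀ (by positivity)] at hk
      linarith
    have hlow : ∀ n, μ (ball x₀ R) ≤ (ENNReal.ofReal cμ)^k * μ (ball (f n) (ε/2)) := by
      intro n
      have h1 : ball x₀ R ⊆ ball (f n) (2*R) := by
        intro w hw
        have h2 := hfmem n
        rw [mem_ball] at h2 hw ⊢
        have h3 := dist_triangle w x₀ (f n)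
        have h4 : dist x₀ (f n) < R := by rwa [dist_comm]
        linarith
      calc μ (ball x₀ R) ≤ μ (ball (f n) (2^k * (ε/2))) :=
            measure_mono (h1.trans (ball_subset_ball hk'))
        _ ≤ (ENNReal.ofReal cμ)^k * μ (ball (f n) (ε/2)) :=
            doub_iter μ cμ hdoub k _ _ (by positivity)
    have hcμtop : (ENNReal.ofReal cμ)^k ≠ ⊤ := by
      exact ENNReal.pow_ne_top ENNReal.ofReal_ne_top
    have hc0 : μ (ball x₀ R) / (ENNReal.ofReal cμ)^k ≠ 0 :=
      (ENNReal.div_pos (hball x₀ R hR).1.ne' hcμtop).ne'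
    have hcμ0 : (ENNReal.ofReal cμ)^k ≠ 0 := by
      intro h
      rw [h] at hlow
      simpa using lt_of_lt_of_le (hball x₀ R hR).1 (hlow 0)
    have hlow' : ∀ n, μ (ball x₀ R) / (ENNReal.ofReal cμ)^k ≤ μ (ball (f n) (ε/2)) := by
      intro n
      rw [ENNReal.div_le_iff hcμ0 hcμtop]
      rw [mul_comm]
      exact hlow n
    have hdisj : Pairwise (Function.onFun Disjoint (fun n => ball (f n) (ε/2))) := by
      intro m n hmn
      rw [Function.onFun]
      apply Set.disjoint_left.2
      intro z hzm hzn
      have hsep := hfsep hmn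
      rw [mem_ball] at hzm hzn
      have h5 := dist_triangle (f m) z (f n)
      have h6 : dist (f m) z < ε/2 := by rwa [dist_comm]
      have h7 : dist z (f n) < ε/2 := hzn
      simp only [Function.onFun] at hsep
      linarith
    have hsub : ∀ n, ball (f n) (ε/2) ⊆ ball x₀ (R + ε/2) := by
      intro n w hw
      have h2 := hfmem n
      rw [mem_ball] at h2 hw ⊢
      have h3 := dist_triangle w (f n) x₀
      have h4 : dist (f n) x₀ < R := h2
      linarith
    have htop : (⊤:ℝ≥0∞) ≤ μ (ball x₀ (R + ε/2)) := by
      calc (⊤:ℝ≥0∞) = ∑' _ : ℕ, μ (ball x₀ R) / (ENNReal.ofReal cμ)^k :=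
            (ENNReal.tsum_const_eq_top_of_ne_zero hc0).symm
        _ ≤ ∑' n, μ (ball (f n) (ε/2)) := ENNReal.tsum_le_tsum hlow'
        _ = μ (⋃ n, ball (f n) (ε/2)) :=
            (measure_iUnion hdisj fun n => measurableSet_ball).symm
        _ ≤ μ (ball x₀ (R + ε/2)) := measure_mono (Set.iUnion_subset hsub)
    exact absurd (lt_of_le_of_lt htop (hball x₀ (R+ε/2) (by positivity)).2) (lt_irrefl _)
  rcases isEmpty_or_nonempty X with hX | hX
  · rw [← TopologicalSpace.isSeparable_univ_iff]
    rw [Set.univ_eq_empty_iff.2 hX]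
    exact Set.countable_empty.isSeparable
  · obtain ⟨x₀⟩ := hX
    rw [← TopologicalSpace.isSeparable_univ_iff]
    have huniv : (Set.univ : Set X) = ⋃ n : ℕ, ball x₀ n := by
      ext z
      simp only [Set.mem_univ, Set.mem_iUnion, mem_ball, true_iff]
      obtain ⟨n, hn⟩ := exists_nat_gt (dist z x₀)
      exact ⟨n, hn⟩
    rw [huniv]
    exact TopologicalSpace.isSeparable_iUnion.2 (fun n => (htb x₀ n).isSeparable)

private lemma atomless_of_rev (μ : Measure X)
    (hball : ∀ (x : X) (r : ℝ), 0 < r → 0 < μ (ball x r) ∧ μ (ball x r) < ⊤)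
    (cR κ : ℝ) (hcR1 : cR < 1) (hκ : 1 < κ)
    (hrev : ∀ (x : X) (r : ℝ), 0 < r → μ (ball x r) ≤ ENNReal.ofReal cR * μ (ball x (κ * r)))
    (x : X) : μ {x} = 0 := by
  have hκ0 : (0:ℝ) < κ := by linarith
  have h1 : ∀ n : ℕ, μ (ball x (κ⁻¹ ^ n)) ≤ (ENNReal.ofReal cR) ^ n * μ (ball x 1) := by
    intro n
    induction n with
    | zero => simp
    | succ n ih =>
      have hr : (0:ℝ) < κ⁻¹ ^ (n+1) := by positivity
      have h2 := hrev x (κ⁻¹ ^ (n+1)) hr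
      have h3 : κ * κ⁻¹ ^ (n+1) = κ⁻¹ ^ n := by
        rw [pow_succ]
        field_simp
      rw [h3] at h2
      calc μ (ball x (κ⁻¹ ^ (n+1))) ≤ ENNReal.ofReal cR * μ (ball x (κ⁻¹ ^ n)) := h2
        _ ≤ ENNReal.ofReal cR * ((ENNReal.ofReal cR)^n * μ (ball x 1)) := by gcongr
        _ = (ENNReal.ofReal cR)^(n+1) * μ (ball x 1) := by ring
  have key : ∀ n : ℕ, μ {x} ≤ (ENNReal.ofReal cR) ^ n * μ (ball x 1) := by
    intro n
    refine le_trans (measure_mono (Set.singleton_subset_iff.2 (mem_ball_self ?_))) (h1 n)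
    positivity
  have htends : Tendsto (fun n : ℕ => (ENNReal.ofReal cR) ^ n * μ (ball x 1)) atTop (𝓝 0) := by
    have h0 : Tendsto (fun n : ℕ => (ENNReal.ofReal cR) ^ n) atTop (𝓝 0) :=
      ENNReal.tendsto_pow_atTop_nhds_zero_of_lt_one (ENNReal.ofReal_lt_one.2 hcR1)
    have := ENNReal.Tendsto.mul_const h0 (Or.inr (hball x 1 one_pos).2.ne)
    simpa using this
  exact le_antisymm (ge_of_tendsto' htends key) zero_le

/-- The integrand kernel of the fractional Sobolev norm. -/
private def ker (μ : Measure X) (u : X → ℝ) (s q : ℝ) (x y : X) : ℝ≥0∞ :=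
  ENNReal.ofReal |u x - u y| ^ q /
    (ENNReal.ofReal (dist x y ^ (s * q)) * μ (ball x (dist x y)))

/-- The inner integral of the fractional Sobolev norm. -/
private def EN (μ : Measure X) (u : X → ℝ) (s q : ℝ) (x : X) : ℝ≥0∞ :=
  ∫⁻ y, ker μ u s q x y ∂μ

end Auxiliary

set_option maxHeartbeats 1000000

/-- Lemma 9.2: the embedding `Ẇ^{s,p}_q(X) ⊆ Ṁ^{s,p}(X)` is bounded:
there is `C = C(q, c_μ) > 0` such that every measurable `u` with finite
`Ẇ^{s,p}_q`-quasinorm belongs to `Ṁ^{s,p}(X)` with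
`‖u‖_{Ṁ^{s,p}} ≤ C ‖u‖_{Ẇ^{s,p}_q}`. -/
theorem statement17 [BorelSpace X]
    (μ : Measure X) (hcomp : μ.IsComplete)
    (hball : ∀ (x : X) (r : ℝ), 0 < r → 0 < μ (ball x r) ∧ μ (ball x r) < ⊤)
    (hdiam : EMetric.diam (Set.univ : Set X) = ⊤)
    (cμ : ℝ) (hcμ : 1 ≤ cμ)
    (hdoub : ∀ (x : X) (r : ℝ), 0 < r → μ (ball x (2 * r)) ≤ ENNReal.ofReal cμ * μ (ball x r))
    (cR κ : ℝ) (hcR0 : 0 < cR) (hcR1 : cR < 1) (hκ : 1 < κ)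
    (hrev : ∀ (x : X) (r : ℝ), 0 < r → μ (ball x r) ≤ ENNReal.ofReal cR * μ (ball x (κ * r)))
    (s p q : ℝ) (hs0 : 0 < s) (hs1 : s ≤ 1) (hp : 0 < p) (hq : 0 < q) :
    ∃ C : ℝ≥0∞, 0 < C ∧ C < ⊤ ∧
      ∀ u : X → ℝ, Measurable u → fracNorm μ s p q u < ⊤ →
        MemHomHajlasz μ s p u ∧
        hajlaszSeminorm μ s p u ≤ C * fracNorm μ s p q u := by
  clear hcomp
  -- X is nonempty
  have hXne : Nonempty X := by
    by_contra h
    rw [not_nonempty_iff] at h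
    rw [Set.univ_eq_empty_iff.2 h, EMetric.diam, Metric.ediam_empty] at hdiam
    simp at hdiam
  obtain ⟨x₀⟩ := hXne
  haveI : TopologicalSpace.SeparableSpace X := sep_of_doubling μ hball cμ hdoub
  haveI : SecondCountableTopology X := UniformSpace.secondCountable_of_separable X
  haveI : SigmaFinite μ := by
    refine ⟨⟨⟨fun n => ball x₀ (n+1), fun _ => trivial,
      fun n => (hball x₀ (n+1) (by positivity)).2, ?_⟩⟩⟩
    ext z
    simp only [Set.mem_iUnion, mem_ball, Set.mem_univ, iff_true]
    obtain ⟨n, hn⟩ := exists_nat_gt (dist z x₀)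
    exact ⟨n, by push_cast; linarith⟩
  have hatom : ∀ x : X, μ {x} = 0 := atomless_of_rev μ hball cR κ hcR1 hκ hrev
  have hq' : (0:ℝ) ≤ 1/q := by positivity
  have hsq : (0:ℝ) ≤ s * q := by positivity
  have h3pos : 0 < ENNReal.ofReal (3 ^ (s*q)) :=
    ENNReal.ofReal_pos.2 (Real.rpow_pos_of_pos (by norm_num) _)
  have hcμpos : 0 < ENNReal.ofReal cμ := ENNReal.ofReal_pos.2 (by linarith)
  set C : ℝ≥0∞ := 2 * 2 ^ (1/q) * (ENNReal.ofReal (3 ^ (s*q))) ^ (1/q) *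
      (ENNReal.ofReal cμ) ^ (1/q) with hC
  have h2pos : (0:ℝ≥0∞) < 2 := by norm_num
  have h2top : (2:ℝ≥0∞) ≠ ⊤ := by norm_num
  have hCpos : 0 < C := by
    rw [hC]
    apply ENNReal.mul_pos _ (ENNReal.rpow_pos hcμpos ENNReal.ofReal_ne_top).ne'
    exact (ENNReal.mul_pos
      (ENNReal.mul_pos h2pos.ne' (ENNReal.rpow_pos h2pos h2top).ne').ne'
      (ENNReal.rpow_pos h3pos ENNReal.ofReal_ne_top).ne').ne'
  have hCtop : C < ⊤ := by
    rw [hC, lt_top_iff_ne_top]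
    exact ENNReal.mul_ne_top
      (ENNReal.mul_ne_top
        (ENNReal.mul_ne_top h2top
          (ENNReal.rpow_ne_top_of_nonneg hq' h2top))
        (ENNReal.rpow_ne_top_of_nonneg hq' ENNReal.ofReal_ne_top))
      (ENNReal.rpow_ne_top_of_nonneg hq' ENNReal.ofReal_ne_top)
  refine ⟨C, hCpos, hCtop, ?_⟩
  intro u hu hufin
  have hfrac : fracNorm μ s p q u = (∫⁻ x, EN μ u s q x ^ (p/q) ∂μ) ^ (1/p) := rfl
  -- measurability of the kernel
  have hK : Measurable (fun w : X × X => μ (ball w.1 (dist w.1 w.2))) := by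
    have hs : MeasurableSet {w : (X × X) × X | dist w.2 w.1.1 < dist w.1.1 w.1.2} := by
      apply (isOpen_lt ?_ ?_).measurableSet
      · exact continuous_snd.dist (continuous_fst.comp continuous_fst)
      · exact (continuous_fst.comp continuous_fst).dist (continuous_snd.comp continuous_fst)
    exact measurable_measure_prodMk_left (ν := μ) hs
  have heF : Measurable (fun w : X × X => ker μ u s q w.1 w.2) := by
    unfold ker
    apply Measurable.div
    · exact (((hu.comp measurable_fst).sub (hu.comp measurable_snd)).abs.ennreal_ofReal).pow_const q
    · exact ((measurable_dist.pow_const (s*q)).ennreal_ofReal).mul hK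
  have heFx : ∀ x : X, Measurable (fun z => ker μ u s q x z) := fun x =>
    heF.comp (measurable_const.prodMk measurable_id)
  have hE : Measurable (EN μ u s q) := Measurable.lintegral_prod_right' heF
  set g : X → ℝ≥0∞ := fun x => C * EN μ u s q x ^ (1/q) with hgdef
  have hg : Measurable g := (hE.pow_const (1/q)).const_mul C
  -- the key pointwise estimate
  have key : ∀ x y : X,
      ENNReal.ofReal |u x - u y| ≤ ENNReal.ofReal (dist x y ^ s) * (g x + g y) := by
    intro x y
    rcases eq_or_ne x y with rfl | hxy
    · simp
    have hd : 0 < dist x y := dist_pos.2 hxy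
    set d := dist x y with hddef
    have hBpos : 0 < μ (ball x (2 * d)) := (hball x (2*d) (by linarith)).1
    have hBfin : μ (ball x (2 * d)) < ⊤ := (hball x (2*d) (by linarith)).2
    set D : ℝ≥0∞ := ENNReal.ofReal ((3*d) ^ (s*q)) * (ENNReal.ofReal cμ * μ (ball x (2*d)))
      with hDdef
    have hDtop : D ≠ ⊤ :=
      ENNReal.mul_ne_top ENNReal.ofReal_ne_top
        (ENNReal.mul_ne_top ENNReal.ofReal_ne_top hBfin.ne)
    have hbound : ∀ w z : X, w ≠ z → dist w z ≤ 3 * d →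
        μ (ball w (dist w z)) ≤ ENNReal.ofReal cμ * μ (ball x (2*d)) →
        ENNReal.ofReal |u w - u z| ^ q ≤ D * ker μ u s q w z := by
      intro w z hwz hle hμle
      have hdwz : 0 < dist w z := dist_pos.2 hwz
      have hden0 : ENNReal.ofReal (dist w z ^ (s*q)) * μ (ball w (dist w z)) ≠ 0 :=
        mul_ne_zero (ENNReal.ofReal_pos.2 (Real.rpow_pos_of_pos hdwz _)).ne'
          (hball w _ hdwz).1.ne'
      have hdenT : ENNReal.ofReal (dist w z ^ (s*q)) * μ (ball w (dist w z)) ≠ ⊤ :=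
        ENNReal.mul_ne_top ENNReal.ofReal_ne_top (hball w _ hdwz).2.ne
      have hdenle : ENNReal.ofReal (dist w z ^ (s*q)) * μ (ball w (dist w z)) ≤ D := by
        rw [hDdef]
        exact mul_le_mul'
          (ENNReal.ofReal_le_ofReal (Real.rpow_le_rpow dist_nonneg hle hsq)) hμle
      have hcancel : ENNReal.ofReal |u w - u z| ^ q =
          ker μ u s q w z * (ENNReal.ofReal (dist w z ^ (s*q)) * μ (ball w (dist w z))) := by
        unfold ker
        exact (ENNReal.div_mul_cancel hden0 hdenT).symm
      rw [hcancel]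
      calc ker μ u s q w z * (ENNReal.ofReal (dist w z ^ (s*q)) * μ (ball w (dist w z)))
          ≤ ker μ u s q w z * D := mul_le_mul' le_rfl hdenle
        _ = D * ker μ u s q w z := mul_comm _ _
    set S := ball x (2*d) \ ({x} ∪ {y} : Set X) with hSdef
    have hμS : μ S = μ (ball x (2*d)) :=
      measure_diff_null (measure_union_null (hatom x) (hatom y))
    have hptwise : ∀ z ∈ S, ENNReal.ofReal |u x - u y| ^ q ≤
        2 ^ q * (D * ker μ u s q x z + D * ker μ u s q y z) := by
      intro z hz
      obtain ⟨hzB, hz2⟩ := hz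
      have hzx : x ≠ z := by
        intro h
        exact hz2 (Or.inl (by simp [h]))
      have hzy : y ≠ z := by
        intro h
        exact hz2 (Or.inr (by simp [h]))
      have hzB' : dist x z < 2 * d := by
        rw [mem_ball] at hzB
        rw [dist_comm]
        exact hzB
      have hb1 : ENNReal.ofReal |u x - u z| ^ q ≤ D * ker μ u s q x z := by
        apply hbound x z hzx (by linarith)
        calc μ (ball x (dist x z)) ≤ μ (ball x (2*d)) :=
              measure_mono (ball_subset_ball hzB'.le)
          _ ≤ ENNReal.ofReal cμ * μ (ball x (2*d)) :=
              le_mul_of_one_le_left zero_le (ENNReal.one_le_ofReal.2 hcμ)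
      have hyx : dist y x = d := by rw [hddef, dist_comm]
      have hyz : dist y z ≤ 3 * d := by
        have h5 := dist_triangle y x z
        linarith
      have hb2 : ENNReal.ofReal |u y - u z| ^ q ≤ D * ker μ u s q y z := by
        apply hbound y z hzy hyz
        have hsub : ball y (3*d) ⊆ ball x (2*(2*d)) := by
          intro w hw
          rw [mem_ball] at hw ⊢
          have h5 := dist_triangle w y x
          linarith
        calc μ (ball y (dist y z)) ≤ μ (ball x (2*(2*d))) :=
            measure_mono ((ball_subset_ball hyz).trans hsub)
          _ ≤ ENNReal.ofReal cμ * μ (ball x (2*d)) := hdoub x (2*d) (by linarith)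
      have tri : ENNReal.ofReal |u x - u y| ≤
          ENNReal.ofReal |u x - u z| + ENNReal.ofReal |u y - u z| := by
        rw [← ENNReal.ofReal_add (abs_nonneg _) (abs_nonneg _)]
        apply ENNReal.ofReal_le_ofReal
        rw [abs_sub_comm (u y) (u z)]
        exact abs_sub_le _ _ _
      calc ENNReal.ofReal |u x - u y| ^ q
          ≤ (ENNReal.ofReal |u x - u z| + ENNReal.ofReal |u y - u z|) ^ q :=
            ENNReal.rpow_le_rpow tri hq.le
        _ ≤ 2 ^ q * (ENNReal.ofReal |u x - u z| ^ q + ENNReal.ofReal |u y - u z| ^ q) :=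
            add_rpow_le_two_rpow _ _ hq.le
        _ ≤ 2 ^ q * (D * ker μ u s q x z + D * ker μ u s q y z) := by gcongr
    have h2q : (2:ℝ≥0∞) ^ q ≠ ⊤ := ENNReal.rpow_ne_top_of_nonneg hq.le (by norm_num)
    have hint : ENNReal.ofReal |u x - u y| ^ q * μ (ball x (2*d)) ≤
        2 ^ q * (D * EN μ u s q x + D * EN μ u s q y) := by
      have h1 : ENNReal.ofReal |u x - u y| ^ q * μ (ball x (2*d)) =
          ∫⁻ _ in S, ENNReal.ofReal |u x - u y| ^ q ∂μ := by
        rw [setLIntegral_const, hμS]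
      rw [h1]
      have hmeas2 : Measurable fun z => 2 ^ q * (D * ker μ u s q x z + D * ker μ u s q y z) :=
        (((heFx x).const_mul D).add ((heFx y).const_mul D)).const_mul _
      calc ∫⁻ z in S, ENNReal.ofReal |u x - u y| ^ q ∂μ
          ≤ ∫⁻ z in S, 2 ^ q * (D * ker μ u s q x z + D * ker μ u s q y z) ∂μ :=
            setLIntegral_mono hmeas2 hptwise
        _ ≤ ∫⁻ z, 2 ^ q * (D * ker μ u s q x z + D * ker μ u s q y z) ∂μ :=
            setLIntegral_le_lintegral _ _
        _ = 2 ^ q * (D * EN μ u s q x + D * EN μ u s q y) := by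
            unfold EN
            rw [lintegral_const_mul' _ _ h2q,
              lintegral_add_left ((heFx x).const_mul D),
              lintegral_const_mul' _ _ hDtop, lintegral_const_mul' _ _ hDtop]
    have hstep : ENNReal.ofReal |u x - u y| ^ q ≤
        2 ^ q * ENNReal.ofReal ((3*d)^(s*q)) * ENNReal.ofReal cμ *
          (EN μ u s q x + EN μ u s q y) := by
      rw [← ENNReal.mul_le_mul_iff_left hBpos.ne' hBfin.ne]
      refine le_trans hint (le_of_eq ?_)
      rw [hDdef]
      ring
    have hroot := ENNReal.rpow_le_rpow hstep hq'
    rw [← ENNReal.rpow_mul, mul_one_div_cancel hq.ne', ENNReal.rpow_one] at hroot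
    refine hroot.trans ?_
    have hsplit : ENNReal.ofReal ((3*d)^(s*q)) =
        ENNReal.ofReal (3^(s*q)) * ENNReal.ofReal (d^(s*q)) := by
      rw [Real.mul_rpow (by norm_num : (0:ℝ) ≤ 3) hd.le, ENNReal.ofReal_mul (by positivity)]
    have hdso : ENNReal.ofReal (d ^ (s*q)) ^ (1/q) = ENNReal.ofReal (d ^ s) := by
      rw [Real.rpow_mul hd.le,
        ← ENNReal.ofReal_rpow_of_nonneg (Real.rpow_nonneg hd.le s) hq.le,
        ← ENNReal.rpow_mul, mul_one_div_cancel hq.ne', ENNReal.rpow_one]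
    calc (2 ^ q * ENNReal.ofReal ((3*d)^(s*q)) * ENNReal.ofReal cμ *
          (EN μ u s q x + EN μ u s q y)) ^ (1/q)
        = ((2:ℝ≥0∞) ^ q) ^ (1/q) * ENNReal.ofReal ((3*d)^(s*q)) ^ (1/q) *
          (ENNReal.ofReal cμ) ^ (1/q) * (EN μ u s q x + EN μ u s q y) ^ (1/q) := by
          rw [ENNReal.mul_rpow_of_nonneg _ _ hq', ENNReal.mul_rpow_of_nonneg _ _ hq',
            ENNReal.mul_rpow_of_nonneg _ _ hq']
      _ = 2 * (ENNReal.ofReal (3^(s*q)) ^ (1/q) * ENNReal.ofReal (d^s)) *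
          (ENNReal.ofReal cμ) ^ (1/q) * (EN μ u s q x + EN μ u s q y) ^ (1/q) := by
          rw [← ENNReal.rpow_mul, mul_one_div_cancel hq.ne', ENNReal.rpow_one,
            hsplit, ENNReal.mul_rpow_of_nonneg _ _ hq', hdso]
      _ ≤ 2 * (ENNReal.ofReal (3^(s*q)) ^ (1/q) * ENNReal.ofReal (d^s)) *
          (ENNReal.ofReal cμ) ^ (1/q) *
          (2 ^ (1/q) * (EN μ u s q x ^ (1/q) + EN μ u s q y ^ (1/q))) := by
          gcongr
          exact add_rpow_le_two_rpow _ _ hq'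
      _ = ENNReal.ofReal (d ^ s) * (g x + g y) := by
          rw [hgdef, hC]
          ring
  have hgrad : IsSGradient μ s u g := ⟨hg, ∅, measure_empty, fun x _ y _ => key x y⟩
  have hint_g : ∫⁻ x, g x ^ p ∂μ = C ^ p * ∫⁻ x, EN μ u s q x ^ (p/q) ∂μ := by
    have hpt : ∀ x, g x ^ p = C ^ p * EN μ u s q x ^ (p/q) := by
      intro x
      rw [hgdef]
      rw [ENNReal.mul_rpow_of_nonneg _ _ hp.le, ← ENNReal.rpow_mul,
        show 1/q * p = p/q by ring]
    simp only [hpt]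
    exact lintegral_const_mul' _ _ (ENNReal.rpow_ne_top_of_nonneg hp.le hCtop.ne)
  have hIfin : (∫⁻ x, EN μ u s q x ^ (p/q) ∂μ) < ⊤ := by
    rw [hfrac] at hufin
    exact (ENNReal.rpow_lt_top_iff_of_pos (by positivity : (0:ℝ) < 1/p)).1 hufin
  constructor
  · exact ⟨hu, g, hgrad, by
      rw [hint_g]
      exact ENNReal.mul_lt_top (ENNReal.rpow_lt_top_of_nonneg hp.le hCtop.ne) hIfin⟩
  · rw [hfrac]
    have hle : hajlaszSeminorm μ s p u ≤ (∫⁻ x, g x ^ p ∂μ) ^ (1/p) := by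
      rw [hajlaszSeminorm]
      exact iInf₂_le g hgrad
    refine hle.trans (le_of_eq ?_)
    rw [hint_g, ENNReal.mul_rpow_of_nonneg _ _ (by positivity : (0:ℝ) ≤ 1/p),
      ← ENNReal.rpow_mul, mul_one_div_cancel hp.ne', ENNReal.rpow_one]

end Paper
end
end

section
/- Let 0 < s ≤ 1 and 0 < p, q < ∞. Then there exists a constant C = C(p, q, c_μ) > 0 such that for every set E ⊂ X, Cap_{M^{s,p}}(E) ≤ C · Cap_{W^{s,p}_q}(E). -/
open MeasureTheory Metric Set Filter
open scoped ENNReal NNReal Topology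

noncomputable section
namespace Paper

variable {X : Type*} [MetricSpace X] [MeasurableSpace X]

private lemma doubling_secondCountable {X : Type*} [MetricSpace X] [MeasurableSpace X]
    [OpensMeasurableSpace X] (μ : Measure X)
    (hball : ∀ (x : X) (r : ℝ), 0 < r → 0 < μ (ball x r) ∧ μ (ball x r) < ⊤)
    {cμ : ℝ} (hcμ : 1 ≤ cμ)
    (hdoub : ∀ (x : X) (r : ℝ), 0 < r → μ (ball x (2 * r)) ≤ ENNReal.ofReal cμ * μ (ball x r))
    (x₀ : X) : SecondCountableTopology X := by
  have hcμ0 : (0:ℝ) < cμ := lt_of_lt_of_le one_pos hcμ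
  apply Metric.secondCountable_of_almost_dense_set
  intro ε hε
  have hnet : ∀ n : ℕ, ∃ t : Finset X, ∀ z ∈ ball x₀ ((n:ℝ) + 1), ∃ y ∈ t, dist z y ≤ ε := by
    intro n
    set R : ℝ := (n:ℝ) + 1 with hRdef
    have hR : 0 < R := by positivity
    obtain ⟨hM0, hMT⟩ := hball x₀ (R + ε) (by positivity)
    set M : ℝ≥0∞ := μ (ball x₀ (R + ε)) with hM
    -- iterated doubling
    have iter : ∀ (y : X) (k : ℕ),
        μ (ball y (2 ^ k * (ε / 2))) ≤ (ENNReal.ofReal cμ) ^ k * μ (ball y (ε / 2)) := by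
      intro y k
      induction k with
      | zero => simp
      | succ k ih =>
        have h2 : (2:ℝ) ^ (k + 1) * (ε / 2) = 2 * ((2:ℝ) ^ k * (ε / 2)) := by ring
        rw [h2]
        calc μ (ball y (2 * ((2:ℝ) ^ k * (ε / 2))))
            ≤ ENNReal.ofReal cμ * μ (ball y ((2:ℝ) ^ k * (ε / 2))) :=
              hdoub y _ (by positivity)
          _ ≤ ENNReal.ofReal cμ * ((ENNReal.ofReal cμ) ^ k * μ (ball y (ε / 2))) :=
              mul_le_mul_right ih _
          _ = (ENNReal.ofReal cμ) ^ (k + 1) * μ (ball y (ε / 2)) := by ring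
    obtain ⟨k, hk⟩ := pow_unbounded_of_one_lt ((2 * R + ε) / (ε / 2)) (by norm_num : (1:ℝ) < 2)
    have hk' : 2 * R + ε ≤ 2 ^ k * (ε / 2) := by
      rw [div_lt_iff₀ (by positivity)] at hk
      nlinarith
    have hpow0 : ((ENNReal.ofReal cμ) ^ k) ≠ 0 :=
      pow_ne_zero _ (ENNReal.ofReal_pos.mpr hcμ0).ne'
    have hpowt : ((ENNReal.ofReal cμ) ^ k) ≠ ⊤ := ENNReal.pow_ne_top ENNReal.ofReal_ne_top
    set δ : ℝ≥0∞ := M / (ENNReal.ofReal cμ) ^ k with hδ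
    have hδ0 : δ ≠ 0 := (ENNReal.div_pos hM0.ne' hpowt).ne'
    have hδt : δ ≠ ⊤ := (ENNReal.div_lt_top hMT.ne hpow0).ne
    have hlow : ∀ y ∈ ball x₀ R, δ ≤ μ (ball y (ε / 2)) := by
      intro y hy
      rw [hδ, ENNReal.div_le_iff hpow0 hpowt]
      rw [mem_ball] at hy
      calc M ≤ μ (ball y (2 * R + ε)) := by
            apply measure_mono
            intro z hz
            rw [mem_ball] at hz ⊢
            have h1 : dist z y ≤ dist z x₀ + dist x₀ y := dist_triangle z x₀ y
            have h2 : dist x₀ y = dist y x₀ := dist_comm x₀ y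
            linarith
        _ ≤ μ (ball y (2 ^ k * (ε / 2))) := measure_mono (ball_subset_ball hk')
        _ ≤ (ENNReal.ofReal cμ) ^ k * μ (ball y (ε / 2)) := iter y k
        _ = μ (ball y (ε / 2)) * (ENNReal.ofReal cμ) ^ k := mul_comm _ _
    have hcard : ∀ t : Finset X, (↑t ⊆ ball x₀ R) →
        ((t : Set X).Pairwise fun a b => ε < dist a b) → (t.card : ℝ≥0∞) * δ ≤ M := by
      intro t hsub hsep
      have hdisj : (t : Set X).PairwiseDisjoint fun y => ball y (ε / 2) := by
        intro a ha b hb hab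
        exact ball_disjoint_ball (by
          have := hsep ha hb hab
          linarith)
      calc (t.card : ℝ≥0∞) * δ = ∑ _y ∈ t, δ := by
            rw [Finset.sum_const, nsmul_eq_mul]
        _ ≤ ∑ y ∈ t, μ (ball y (ε / 2)) := Finset.sum_le_sum fun y hy => hlow y (hsub hy)
        _ = μ (⋃ y ∈ t, ball y (ε / 2)) :=
            (measure_biUnion_finset hdisj fun _ _ => measurableSet_ball).symm
        _ ≤ M := by
            apply measure_mono
            refine Set.iUnion₂_subset fun y hy => ?_
            intro z hz
            have hy' := hsub hy
            rw [mem_ball] at hz hy' ⊢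
            have h1 : dist z x₀ ≤ dist z y + dist y x₀ := dist_triangle z y x₀
            linarith
    obtain ⟨N, hN⟩ := ENNReal.exists_nat_gt (show M / δ ≠ ⊤ from (ENNReal.div_lt_top hMT.ne hδ0).ne)
    have hbound : ∀ m : ℕ, (∃ t : Finset X, (↑t ⊆ ball x₀ R) ∧
        ((t : Set X).Pairwise fun a b => ε < dist a b) ∧ t.card = m) → m ≤ N := by
      rintro m ⟨t, hsub, hsep, hcardt⟩
      have h1 : (m : ℝ≥0∞) ≤ M / δ := by
        rw [ENNReal.le_div_iff_mul_le (Or.inl hδ0) (Or.inl hδt)]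
        rw [← hcardt]
        exact hcard t hsub hsep
      have h2 : (m : ℝ≥0∞) < (N : ℝ≥0∞) := h1.trans_lt hN
      exact_mod_cast h2.le
    classical
    set P : ℕ → Prop := fun m => ∃ t : Finset X, (↑t ⊆ ball x₀ R) ∧
        ((t : Set X).Pairwise fun a b => ε < dist a b) ∧ t.card = m with hP
    have hP0 : P 0 := ⟨∅, by simp, by simp, rfl⟩
    have hPk : P (Nat.findGreatest P N) := Nat.findGreatest_spec (Nat.zero_le N) hP0
    obtain ⟨t, hsub, hsep, hcardt⟩ := hPk
    refine ⟨t, fun z hz => ?_⟩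
    by_contra hcon
    push_neg at hcon
    have hzt : z ∉ t := by
      intro hzt
      have := hcon z hzt
      rw [dist_self] at this
      linarith
    have hP1 : P (Nat.findGreatest P N + 1) := by
      refine ⟨insert z t, ?_, ?_, ?_⟩
      · rw [Finset.coe_insert]
        exact Set.insert_subset hz hsub
      · rw [Finset.coe_insert]
        apply Set.Pairwise.insert hsep
        intro y hy hzy
        have := hcon y hy
        constructor
        · exact this
        · rw [dist_comm]; exact this
      · rw [Finset.card_insert_of_notMem hzt, hcardt]
    have hle : Nat.findGreatest P N + 1 ≤ N := hbound _ hP1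
    exact Nat.findGreatest_is_greatest (Nat.lt_succ_self _) hle hP1
  choose t ht using hnet
  refine ⟨⋃ n, (t n : Set X), Set.countable_iUnion (fun n => (t n).countable_toSet),
    fun z => ?_⟩
  obtain ⟨n, hn⟩ := exists_nat_gt (dist z x₀)
  obtain ⟨y, hy, hdy⟩ := ht n z (by rw [mem_ball]; linarith)
  exact ⟨y, Set.mem_iUnion.mpr ⟨n, hy⟩, hdy⟩

private lemma add_rpow_le (a b : ℝ≥0∞) {e : ℝ} (he : 0 ≤ e) :
    (a + b) ^ e ≤ 2 ^ e * (a ^ e + b ^ e) := by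
  calc (a + b) ^ e ≤ (2 * max a b) ^ e := by
        apply ENNReal.rpow_le_rpow _ he
        rw [two_mul]
        exact add_le_add (le_max_left a b) (le_max_right a b)
    _ = 2 ^ e * (max a b) ^ e := ENNReal.mul_rpow_of_nonneg _ _ he
    _ ≤ 2 ^ e * (a ^ e + b ^ e) := by
        apply mul_le_mul_right
        rcases le_total a b with h | h
        · rw [max_eq_right h]; exact le_add_self
        · rw [max_eq_left h]; exact self_le_add_right _ _

private lemma lsc_measure_ball {X : Type*} [MetricSpace X] [MeasurableSpace X]
    (μ : Measure X) :
    LowerSemicontinuous (fun pr : X × X => μ (ball pr.1 (dist pr.1 pr.2))) := by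
  rintro ⟨x, y⟩ c hc
  simp only at hc
  -- find r' < dist x y with c < μ (ball x r')
  have hex : ∃ r' : ℝ, r' < dist x y ∧ c < μ (ball x r') := by
    by_contra hcon
    push_neg at hcon
    have hdir : Directed (· ⊆ ·) (fun n : ℕ => ball x (dist x y - 1 / (n + 1))) := by
      have key : ∀ m n : ℕ, m ≤ n →
          (dist x y - 1 / (m + 1) : ℝ) ≤ dist x y - 1 / (n + 1) := by
        intro m n h
        have h1 : (0:ℝ) < (m:ℝ) + 1 := by positivity
        have h2 : (m:ℝ) + 1 ≤ (n:ℝ) + 1 := by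
          have : (m:ℝ) ≤ (n:ℝ) := Nat.cast_le.mpr h
          linarith
        have := one_div_le_one_div_of_le h1 h2
        linarith
      exact fun m n => ⟨max m n, ball_subset_ball (key _ _ (le_max_left _ _)),
        ball_subset_ball (key _ _ (le_max_right _ _))⟩
    have hsub : ball x (dist x y) ⊆ ⋃ n : ℕ, ball x (dist x y - 1 / (n + 1)) := by
      intro z hz
      rw [mem_ball] at hz
      obtain ⟨n, hn⟩ := exists_nat_one_div_lt (sub_pos.mpr hz)
      exact Set.mem_iUnion.mpr ⟨n, by rw [mem_ball]; push_cast at hn ⊢; linarith⟩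
    have hle : μ (ball x (dist x y)) ≤ c := by
      calc μ (ball x (dist x y)) ≤ μ (⋃ n : ℕ, ball x (dist x y - 1 / (n + 1))) :=
            measure_mono hsub
        _ = ⨆ n : ℕ, μ (ball x (dist x y - 1 / (n + 1))) := hdir.measure_iUnion
        _ ≤ c := iSup_le fun n => hcon _ (by
            have : (0:ℝ) < 1 / ((n:ℝ) + 1) := by positivity
            linarith)
    exact absurd hc (not_lt.mpr hle)
  obtain ⟨r', hr'r, hcr'⟩ := hex
  have hδ : (0:ℝ) < (dist x y - r') / 4 := by linarith
  set δ := (dist x y - r') / 4 with hδdef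
  have hmem : (ball x δ ×ˢ ball y δ) ∈ 𝓝 (x, y) :=
    prod_mem_nhds (ball_mem_nhds _ hδ) (ball_mem_nhds _ hδ)
  filter_upwards [hmem] with p hp
  obtain ⟨hp1, hp2⟩ := hp
  rw [mem_ball] at hp1 hp2
  refine hcr'.trans_le (measure_mono ?_)
  intro z hz
  rw [mem_ball] at hz ⊢
  have h4 : dist x y ≤ dist x p.1 + dist p.1 p.2 + dist p.2 y := dist_triangle4 x p.1 p.2 y
  have hxp : dist x p.1 < δ := by rw [dist_comm]; exact hp1
  have h5 : dist z p.1 ≤ dist z x + dist x p.1 := dist_triangle z x p.1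
  linarith

private lemma key_grad {X : Type*} [MetricSpace X] [MeasurableSpace X]
    [OpensMeasurableSpace X] (μ : Measure X)
    (hball : ∀ (x : X) (r : ℝ), 0 < r → 0 < μ (ball x r) ∧ μ (ball x r) < ⊤)
    {cμ : ℝ} (hcμ : 1 ≤ cμ)
    (hdoub : ∀ (x : X) (r : ℝ), 0 < r → μ (ball x (2 * r)) ≤ ENNReal.ofReal cμ * μ (ball x r))
    {s q : ℝ} (hs0 : 0 < s) (hq : 0 < q)
    (u : X → ℝ) (hu : Measurable u) (x y : X) (hxy : x ≠ y) :
    ENNReal.ofReal |u x - u y| ^ q ≤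
      2 ^ q * ENNReal.ofReal (3 ^ (s * q) * cμ) * ENNReal.ofReal (dist x y ^ (s * q)) *
        ((∫⁻ z, ENNReal.ofReal |u x - u z| ^ q /
            (ENNReal.ofReal (dist x z ^ (s * q)) * μ (ball x (dist x z))) ∂μ) +
         (∫⁻ z, ENNReal.ofReal |u y - u z| ^ q /
            (ENNReal.ofReal (dist y z ^ (s * q)) * μ (ball y (dist y z))) ∂μ)) := by
  have hr : 0 < dist x y := dist_pos.mpr hxy
  set r := dist x y with hrdef
  set A := ball x (2 * r) with hA
  obtain ⟨hA0, hAt⟩ := hball x (2 * r) (by positivity)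
  set Ix := ∫⁻ z, ENNReal.ofReal |u x - u z| ^ q /
      (ENNReal.ofReal (dist x z ^ (s * q)) * μ (ball x (dist x z))) ∂μ with hIx
  set Iy := ∫⁻ z, ENNReal.ofReal |u y - u z| ^ q /
      (ENNReal.ofReal (dist y z ^ (s * q)) * μ (ball y (dist y z))) ∂μ with hIy
  set Q := ENNReal.ofReal |u x - u y| ^ q with hQ
  set Dx := ENNReal.ofReal ((2 * r) ^ (s * q)) * μ A with hDx
  obtain ⟨hB0, hBt⟩ := hball y (3 * r) (by positivity)
  set Dy := ENNReal.ofReal ((3 * r) ^ (s * q)) * μ (ball y (3 * r)) with hDy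
  have hq' : (0:ℝ) ≤ s * q := by positivity
  have hDx0 : Dx ≠ 0 := by
    apply mul_ne_zero
    · exact (ENNReal.ofReal_pos.mpr (Real.rpow_pos_of_pos (by positivity) _)).ne'
    · exact hA0.ne'
  have hDxt : Dx ≠ ⊤ := ENNReal.mul_ne_top ENNReal.ofReal_ne_top hAt.ne
  have hDy0 : Dy ≠ 0 := by
    apply mul_ne_zero
    · exact (ENNReal.ofReal_pos.mpr (Real.rpow_pos_of_pos (by positivity) _)).ne'
    · exact hB0.ne'
  have hDyt : Dy ≠ ⊤ := ENNReal.mul_ne_top ENNReal.ofReal_ne_top hBt.ne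
  -- pointwise bounds on A
  have bound1 : ∀ z ∈ A, ENNReal.ofReal |u x - u z| ^ q ≤
      Dx * (ENNReal.ofReal |u x - u z| ^ q /
        (ENNReal.ofReal (dist x z ^ (s * q)) * μ (ball x (dist x z)))) := by
    intro z hz
    rcases eq_or_ne z x with rfl | hzx
    · simp [ENNReal.zero_rpow_of_pos hq]
    · have hdz : dist x z ≤ 2 * r := by
        rw [mem_ball] at hz
        rw [dist_comm]
        linarith
      have hden_le : ENNReal.ofReal (dist x z ^ (s * q)) * μ (ball x (dist x z)) ≤ Dx := by
        rw [hDx]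
        exact mul_le_mul' (ENNReal.ofReal_le_ofReal (Real.rpow_le_rpow dist_nonneg hdz hq'))
          (measure_mono (ball_subset_ball hdz))
      calc ENNReal.ofReal |u x - u z| ^ q
          = Dx * (ENNReal.ofReal |u x - u z| ^ q / Dx) :=
            (ENNReal.mul_div_cancel hDx0 hDxt).symm
        _ ≤ _ := mul_le_mul_right (ENNReal.div_le_div_left hden_le _) _
  have bound2 : ∀ z ∈ A, ENNReal.ofReal |u y - u z| ^ q ≤
      Dy * (ENNReal.ofReal |u y - u z| ^ q /
        (ENNReal.ofReal (dist y z ^ (s * q)) * μ (ball y (dist y z)))) := by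
    intro z hz
    rcases eq_or_ne z y with rfl | hzy
    · simp [ENNReal.zero_rpow_of_pos hq]
    · have hdz : dist y z ≤ 3 * r := by
        rw [mem_ball] at hz
        have h1 : dist y z ≤ dist y x + dist x z := dist_triangle y x z
        have h2 : dist y x = r := by rw [dist_comm]
        have h3 : dist x z = dist z x := dist_comm x z
        linarith
      have hden_le : ENNReal.ofReal (dist y z ^ (s * q)) * μ (ball y (dist y z)) ≤ Dy := by
        rw [hDy]
        exact mul_le_mul' (ENNReal.ofReal_le_ofReal (Real.rpow_le_rpow dist_nonneg hdz hq'))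
          (measure_mono (ball_subset_ball hdz))
      calc ENNReal.ofReal |u y - u z| ^ q
          = Dy * (ENNReal.ofReal |u y - u z| ^ q / Dy) :=
            (ENNReal.mul_div_cancel hDy0 hDyt).symm
        _ ≤ _ := mul_le_mul_right (ENNReal.div_le_div_left hden_le _) _
  have h2qt : ((2:ℝ≥0∞) ^ q) ≠ ⊤ :=
    (ENNReal.rpow_lt_top_of_nonneg hq.le (by norm_num)).ne
  have int1 : ∫⁻ z in A, ENNReal.ofReal |u x - u z| ^ q ∂μ ≤ Dx * Ix := by
    calc ∫⁻ z in A, ENNReal.ofReal |u x - u z| ^ q ∂μ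
        ≤ ∫⁻ z in A, Dx * (ENNReal.ofReal |u x - u z| ^ q /
            (ENNReal.ofReal (dist x z ^ (s * q)) * μ (ball x (dist x z)))) ∂μ :=
          setLIntegral_mono' measurableSet_ball bound1
      _ = Dx * ∫⁻ z in A, ENNReal.ofReal |u x - u z| ^ q /
            (ENNReal.ofReal (dist x z ^ (s * q)) * μ (ball x (dist x z))) ∂μ :=
          lintegral_const_mul' _ _ hDxt
      _ ≤ Dx * Ix := mul_le_mul_right (setLIntegral_le_lintegral _ _) _
  have int2 : ∫⁻ z in A, ENNReal.ofReal |u y - u z| ^ q ∂μ ≤ Dy * Iy := by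
    calc ∫⁻ z in A, ENNReal.ofReal |u y - u z| ^ q ∂μ
        ≤ ∫⁻ z in A, Dy * (ENNReal.ofReal |u y - u z| ^ q /
            (ENNReal.ofReal (dist y z ^ (s * q)) * μ (ball y (dist y z)))) ∂μ :=
          setLIntegral_mono' measurableSet_ball bound2
      _ = Dy * ∫⁻ z in A, ENNReal.ofReal |u y - u z| ^ q /
            (ENNReal.ofReal (dist y z ^ (s * q)) * μ (ball y (dist y z))) ∂μ :=
          lintegral_const_mul' _ _ hDyt
      _ ≤ Dy * Iy := mul_le_mul_right (setLIntegral_le_lintegral _ _) _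
  have step3 : μ A * Q ≤ 2 ^ q * ((∫⁻ z in A, ENNReal.ofReal |u x - u z| ^ q ∂μ) +
      (∫⁻ z in A, ENNReal.ofReal |u y - u z| ^ q ∂μ)) := by
    have hpt : ∀ z, Q ≤ 2 ^ q * (ENNReal.ofReal |u x - u z| ^ q +
        ENNReal.ofReal |u y - u z| ^ q) := by
      intro z
      have htri : ENNReal.ofReal |u x - u y| ≤
          ENNReal.ofReal |u x - u z| + ENNReal.ofReal |u y - u z| := by
        rw [← ENNReal.ofReal_add (abs_nonneg _) (abs_nonneg _)]
        apply ENNReal.ofReal_le_ofReal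
        calc |u x - u y| ≤ |u x - u z| + |u z - u y| := abs_sub_le _ _ _
          _ = |u x - u z| + |u y - u z| := by rw [abs_sub_comm (u z)]
      calc Q ≤ (ENNReal.ofReal |u x - u z| + ENNReal.ofReal |u y - u z|) ^ q :=
            ENNReal.rpow_le_rpow htri hq.le
        _ ≤ _ := add_rpow_le _ _ hq.le
    have hfmeas : Measurable fun z => ENNReal.ofReal |u x - u z| ^ q :=
      ((measurable_const.sub hu).abs.ennreal_ofReal).pow measurable_const
    calc μ A * Q = Q * μ A := mul_comm _ _
      _ = ∫⁻ _ in A, Q ∂μ := (setLIntegral_const A Q).symm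
      _ ≤ ∫⁻ z in A, 2 ^ q * (ENNReal.ofReal |u x - u z| ^ q +
            ENNReal.ofReal |u y - u z| ^ q) ∂μ := lintegral_mono fun z => hpt z
      _ = 2 ^ q * ∫⁻ z in A, (ENNReal.ofReal |u x - u z| ^ q +
            ENNReal.ofReal |u y - u z| ^ q) ∂μ := lintegral_const_mul' _ _ h2qt
      _ = _ := by rw [lintegral_add_left hfmeas]
  set B := ENNReal.ofReal (3 ^ (s * q) * cμ * r ^ (s * q)) * μ A with hB
  have hcμ0 : (0:ℝ) < cμ := lt_of_lt_of_le one_pos hcμ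
  have hDxB : Dx ≤ B := by
    have hreal : (2 * r) ^ (s * q) ≤ 3 ^ (s * q) * cμ * r ^ (s * q) := by
      rw [Real.mul_rpow (by norm_num) hr.le]
      have h23 : (2:ℝ) ^ (s * q) ≤ 3 ^ (s * q) :=
        Real.rpow_le_rpow (by norm_num) (by norm_num) hq'
      have hrp : (0:ℝ) ≤ r ^ (s * q) := Real.rpow_nonneg hr.le _
      have h3p : (0:ℝ) ≤ (3:ℝ) ^ (s * q) := Real.rpow_nonneg (by norm_num) _
      nlinarith [mul_le_mul_of_nonneg_right h23 hrp,
        mul_nonneg (mul_nonneg h3p hrp) (sub_nonneg.mpr hcμ)]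
    rw [hDx, hB]
    exact mul_le_mul_left (ENNReal.ofReal_le_ofReal hreal) _
  have hdouby : μ (ball y (3 * r)) ≤ ENNReal.ofReal cμ * μ A := by
    have hsub : ball y (3 * r) ⊆ ball x (2 * (2 * r)) := by
      intro z hz
      rw [mem_ball] at hz ⊢
      have h1 : dist z x ≤ dist z y + dist y x := dist_triangle z y x
      have h2 : dist y x = r := by rw [dist_comm]
      linarith
    exact (measure_mono hsub).trans (hdoub x (2 * r) (by positivity))
  have hDyB : Dy ≤ B := by
    calc Dy ≤ ENNReal.ofReal ((3 * r) ^ (s * q)) * (ENNReal.ofReal cμ * μ A) := by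
          rw [hDy]; exact mul_le_mul_right hdouby _
      _ = ENNReal.ofReal ((3 * r) ^ (s * q) * cμ) * μ A := by
          rw [← mul_assoc, ← ENNReal.ofReal_mul (Real.rpow_nonneg (by positivity) _)]
      _ = B := by
          rw [hB]
          congr 2
          rw [Real.mul_rpow (by norm_num) hr.le]
          ring
  have main : μ A * Q ≤ (2 ^ q * ENNReal.ofReal (3 ^ (s * q) * cμ) *
      ENNReal.ofReal (r ^ (s * q)) * (Ix + Iy)) * μ A := by
    calc μ A * Q ≤ 2 ^ q * ((∫⁻ z in A, ENNReal.ofReal |u x - u z| ^ q ∂μ) +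
          (∫⁻ z in A, ENNReal.ofReal |u y - u z| ^ q ∂μ)) := step3
      _ ≤ 2 ^ q * (Dx * Ix + Dy * Iy) := by gcongr
      _ ≤ 2 ^ q * (B * Ix + B * Iy) := by gcongr
      _ = 2 ^ q * (B * (Ix + Iy)) := by ring
      _ = _ := by
          rw [hB, ENNReal.ofReal_mul (by positivity)]
          ring
  have := (ENNReal.mul_le_mul_iff_left hA0.ne' hAt.ne).mp (by
    calc Q * μ A = μ A * Q := mul_comm _ _
      _ ≤ _ := main)
  exact this

/-- Lemma 9.4: there is a constant `C = C(p, q, c_μ) > 0` such that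
`Cap_{M^{s,p}}(E) ≤ C · Cap_{W^{s,p}_q}(E)` for every set `E ⊆ X`. -/
theorem statement18 [BorelSpace X]
    (μ : Measure X) (hcomp : μ.IsComplete)
    (hball : ∀ (x : X) (r : ℝ), 0 < r → 0 < μ (ball x r) ∧ μ (ball x r) < ⊤)
    (hdiam : EMetric.diam (Set.univ : Set X) = ⊤)
    (cμ : ℝ) (hcμ : 1 ≤ cμ)
    (hdoub : ∀ (x : X) (r : ℝ), 0 < r → μ (ball x (2 * r)) ≤ ENNReal.ofReal cμ * μ (ball x r))
    (cR κ : ℝ) (hcR0 : 0 < cR) (hcR1 : cR < 1) (hκ : 1 < κ)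
    (hrev : ∀ (x : X) (r : ℝ), 0 < r → μ (ball x r) ≤ ENNReal.ofReal cR * μ (ball x (κ * r)))
    (s p q : ℝ) (hs0 : 0 < s) (hs1 : s ≤ 1) (hp : 0 < p) (hq : 0 < q) :
    ∃ C : ℝ≥0∞, 0 < C ∧ C < ⊤ ∧ ∀ E : Set X,
      hajlaszCapacity μ s p E ≤ C * fracCapacity μ s p q E := by
  -- nonemptiness
  have hne : Nonempty X := by
    by_contra h
    rw [not_nonempty_iff] at h
    rw [Set.univ_eq_empty_iff.mpr h, EMetric.diam, Metric.ediam_empty] at hdiam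
    simp at hdiam
  obtain ⟨x₀⟩ := hne
  haveI : SecondCountableTopology X := doubling_secondCountable μ hball hcμ hdoub x₀
  haveI : SigmaFinite μ := by
    refine ⟨⟨⟨fun n => ball x₀ (n + 1), fun _ => trivial,
      fun n => (hball x₀ (n + 1) (by positivity)).2, ?_⟩⟩⟩
    ext z
    simp only [Set.mem_iUnion, mem_ball, Set.mem_univ, iff_true]
    obtain ⟨n, hn⟩ := exists_nat_gt (dist z x₀)
    exact ⟨n, hn.trans (by linarith)⟩
  have hcμ0 : (0:ℝ) < cμ := lt_of_lt_of_le one_pos hcμ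
  set Kc : ℝ≥0∞ := (2:ℝ≥0∞) ^ q * ENNReal.ofReal (3 ^ (s * q) * cμ) with hKc
  have hKc0 : Kc ≠ 0 := by
    apply mul_ne_zero
    · exact (ENNReal.rpow_pos (by norm_num) (by norm_num)).ne'
    · exact (ENNReal.ofReal_pos.mpr (by positivity)).ne'
  have hKct : Kc ≠ ⊤ :=
    ENNReal.mul_ne_top (ENNReal.rpow_lt_top_of_nonneg hq.le (by norm_num)).ne
      ENNReal.ofReal_ne_top
  set c : ℝ≥0∞ := (2:ℝ≥0∞) ^ ((1:ℝ)/q) * Kc ^ ((1:ℝ)/q) with hc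
  have hc0 : c ≠ 0 := by
    apply mul_ne_zero
    · exact (ENNReal.rpow_pos (by norm_num) (by norm_num)).ne'
    · exact (ENNReal.rpow_pos (hKc0.bot_lt) hKct).ne'
  have hct : c ≠ ⊤ :=
    ENNReal.mul_ne_top (ENNReal.rpow_lt_top_of_nonneg (by positivity) (by norm_num)).ne
      (ENNReal.rpow_lt_top_of_nonneg (by positivity) hKct).ne
  have hMt : max 1 c ≠ ⊤ := by
    rw [ne_eq, max_eq_top]
    push_neg
    exact ⟨ENNReal.one_ne_top, hct⟩
  set C : ℝ≥0∞ := (max 1 c) ^ p with hC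
  have hC0 : C ≠ 0 :=
    (ENNReal.rpow_pos (lt_of_lt_of_le one_pos (le_max_left _ _)) hMt).ne'
  have hCt : C ≠ ⊤ := (ENNReal.rpow_lt_top_of_nonneg hp.le hMt).ne
  refine ⟨C, hC0.bot_lt, hCt.lt_top, fun E => ?_⟩
  have main : ∀ u : X → ℝ, (MemFrac μ s p q u ∧ lpNormP μ p u Set.univ < ⊤ ∧
      ∃ U : Set X, IsOpen U ∧ E ⊆ U ∧ ∀ x ∈ U, 1 ≤ u x) →
      hajlaszCapacity μ s p E ≤
        C * ((lpNormP μ p u Set.univ ^ (1/p) + fracNorm μ s p q u) ^ p) := by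
    rintro u ⟨⟨humeas, hufin⟩, hlp, hU⟩
    set I : X → ℝ≥0∞ := fun x => ∫⁻ z, ENNReal.ofReal |u x - u z| ^ q /
        (ENNReal.ofReal (dist x z ^ (s * q)) * μ (ball x (dist x z))) ∂μ with hI
    set g : X → ℝ≥0∞ := fun x => c * I x ^ ((1:ℝ)/q) with hg
    have hImeas : Measurable I := by
      have h1 : Measurable fun pr : X × X => ENNReal.ofReal |u pr.1 - u pr.2| ^ q :=
        (((humeas.comp measurable_fst).sub (humeas.comp measurable_snd)).abs.ennreal_ofReal).pow
          measurable_const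
      have h2 : Measurable fun pr : X × X => ENNReal.ofReal (dist pr.1 pr.2 ^ (s * q)) := by
        have hsq' : (0:ℝ) ≤ s * q := by positivity
        have heq : ∀ pr : X × X, ENNReal.ofReal (dist pr.1 pr.2 ^ (s * q)) =
            ENNReal.ofReal (dist pr.1 pr.2) ^ (s * q) := fun pr =>
          (ENNReal.ofReal_rpow_of_nonneg dist_nonneg hsq').symm
        simp_rw [heq]
        exact (measurable_dist.ennreal_ofReal).pow measurable_const
      have h3 : Measurable fun pr : X × X => μ (ball pr.1 (dist pr.1 pr.2)) :=
        (lsc_measure_ball μ).measurable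
      exact Measurable.lintegral_prod_right' (h1.div (h2.mul h3))
    have hgmeas : Measurable g := measurable_const.mul (hImeas.pow measurable_const)
    have hgrad : IsSGradient μ s u g := by
      refine ⟨hgmeas, ∅, measure_empty, fun x _ y _ => ?_⟩
      rcases eq_or_ne x y with rfl | hxy
      · simp
      · have hr : 0 < dist x y := dist_pos.mpr hxy
        have hkey := key_grad μ hball hcμ hdoub hs0 hq u humeas x y hxy
        have e1 : ENNReal.ofReal |u x - u y| =
            (ENNReal.ofReal |u x - u y| ^ q) ^ ((1:ℝ)/q) := by
          rw [← ENNReal.rpow_mul, mul_one_div_cancel hq.ne', ENNReal.rpow_one]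
        rw [e1]
        calc (ENNReal.ofReal |u x - u y| ^ q) ^ ((1:ℝ)/q)
            ≤ (Kc * ENNReal.ofReal (dist x y ^ (s * q)) * (I x + I y)) ^ ((1:ℝ)/q) := by
              apply ENNReal.rpow_le_rpow _ (by positivity)
              exact hkey
          _ = Kc ^ ((1:ℝ)/q) * (ENNReal.ofReal (dist x y ^ (s * q))) ^ ((1:ℝ)/q) *
              (I x + I y) ^ ((1:ℝ)/q) := by
              rw [ENNReal.mul_rpow_of_nonneg _ _ (by positivity),
                ENNReal.mul_rpow_of_nonneg _ _ (by positivity)]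
          _ = Kc ^ ((1:ℝ)/q) * ENNReal.ofReal (dist x y ^ s) * (I x + I y) ^ ((1:ℝ)/q) := by
              congr 2
              rw [ENNReal.ofReal_rpow_of_pos (Real.rpow_pos_of_pos hr _),
                ← Real.rpow_mul hr.le]
              congr 1
              field_simp
          _ ≤ Kc ^ ((1:ℝ)/q) * ENNReal.ofReal (dist x y ^ s) *
              (2 ^ ((1:ℝ)/q) * (I x ^ ((1:ℝ)/q) + I y ^ ((1:ℝ)/q))) := by
              exact mul_le_mul_right (add_rpow_le _ _ (by positivity)) _
          _ = ENNReal.ofReal (dist x y ^ s) * (g x + g y) := by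
              simp only [hg, hc]
              ring
    set T : ℝ≥0∞ := ∫⁻ x, I x ^ (p / q) ∂μ with hT
    have hfrac : fracNorm μ s p q u = T ^ ((1:ℝ)/p) := rfl
    have hTfin : T ≠ ⊤ := by
      intro h
      rw [hfrac, h, ENNReal.top_rpow_of_pos (by positivity)] at hufin
      exact lt_irrefl _ hufin
    have hcpt : c ^ p ≠ ⊤ := (ENNReal.rpow_lt_top_of_nonneg hp.le hct).ne
    have hgint : (∫⁻ x, g x ^ p ∂μ) = c ^ p * T := by
      simp only [hg]
      calc ∫⁻ x, (c * I x ^ ((1:ℝ)/q)) ^ p ∂μ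
          = ∫⁻ x, c ^ p * (I x ^ ((1:ℝ)/q)) ^ p ∂μ := by
            simp_rw [ENNReal.mul_rpow_of_nonneg _ _ hp.le]
        _ = c ^ p * ∫⁻ x, (I x ^ ((1:ℝ)/q)) ^ p ∂μ := lintegral_const_mul' _ _ hcpt
        _ = c ^ p * T := by
            rw [hT]
            congr 1
            apply lintegral_congr
            intro x
            rw [← ENNReal.rpow_mul]
            congr 1
            field_simp
    have hmem : MemHomHajlasz μ s p u := by
      refine ⟨humeas, g, hgrad, ?_⟩
      rw [hgint]
      exact ENNReal.mul_lt_top hcpt.lt_top hTfin.lt_top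
    have hle1 : hajlaszCapacity μ s p E ≤ hajlaszNorm μ s p u ^ p :=
      iInf₂_le u ⟨hmem, hlp, hU⟩
    have hsem : hajlaszSeminorm μ s p u ≤ c * fracNorm μ s p q u := by
      refine (iInf₂_le g hgrad).trans ?_
      rw [hgint, hfrac, ENNReal.mul_rpow_of_nonneg _ _ (by positivity),
        ← ENNReal.rpow_mul, mul_one_div_cancel hp.ne', ENNReal.rpow_one]
    have hnorm : hajlaszNorm μ s p u ≤
        max 1 c * (lpNormP μ p u Set.univ ^ (1/p) + fracNorm μ s p q u) := by
      rw [hajlaszNorm, mul_add]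
      apply add_le_add
      · calc lpNormP μ p u Set.univ ^ (1/p) = 1 * lpNormP μ p u Set.univ ^ (1/p) :=
            (one_mul _).symm
          _ ≤ _ := mul_le_mul_left (le_max_left _ _) _
      · exact hsem.trans (mul_le_mul_left (le_max_right _ _) _)
    calc hajlaszCapacity μ s p E ≤ hajlaszNorm μ s p u ^ p := hle1
      _ ≤ (max 1 c * (lpNormP μ p u Set.univ ^ (1/p) + fracNorm μ s p q u)) ^ p :=
          ENNReal.rpow_le_rpow hnorm hp.le
      _ = C * ((lpNormP μ p u Set.univ ^ (1/p) + fracNorm μ s p q u) ^ p) := by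
          rw [ENNReal.mul_rpow_of_nonneg _ _ hp.le, hC]
  rw [fracCapacity, ENNReal.mul_iInf_of_ne hC0 hCt]
  refine le_iInf fun u => ?_
  rw [ENNReal.mul_iInf_of_ne hC0 hCt]
  exact le_iInf fun hu => main u hu

end Paper
end
end
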